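/- arXiv:quant-ph/0412133 — 5 statements merged into one kernel-verified Lean document; each statement's English description precedes it below -/
import Mathlib

section
/- Let T be a quantum channel such that ν_α(T) = ν_β(T) for some α > β ≥ 0, where ν_γ(T) = inf_ρ S_γ(T(ρ)) is the minimal output γ-entropy. If ν_α(T^{⊗N}) = N·ν_α(T) for all N, then ν_β(T^{⊗N}) = N·ν_β(T) for all N. -/
open Matrix BigOperators
open scoped ComplexOrder

noncomputable section

variable {n : Type*} [Fintype n] [DecidableEq n]

/-- A density matrix: positive semidefinite with unit trace. -/
def IsDensity (ρ : Matrix n n ℂ) : Prop := ρ.PosSemidef ∧ ρ.trace = 1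

/-- `tr(ρ^α)` via functional calculus (powers of eigenvalues, with `0^α := 0`). -/
noncomputable def trPow (ρ : Matrix n n ℂ) (α : ℝ) : ℝ :=
  if h : ρ.IsHermitian then ∑ i, if h.eigenvalues i = 0 then 0 else (h.eigenvalues i) ^ α else 0

/-- The von Neumann entropy `-tr(ρ log ρ)` (base-2 logarithm). -/
noncomputable def vN (ρ : Matrix n n ℂ) : ℝ :=
  if h : ρ.IsHermitian then -∑ i, (h.eigenvalues i) * Real.logb 2 (h.eigenvalues i) else 0

/-- The Renyi α-entropy, with the von Neumann entropy at α = 1. -/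
noncomputable def renyi (ρ : Matrix n n ℂ) (α : ℝ) : ℝ :=
  if α = 1 then vN ρ else (1 - α)⁻¹ * Real.logb 2 (trPow ρ α)

/-- Largest eigenvalue (operator norm for positive semidefinite matrices). -/
noncomputable def maxEig (A : Matrix n n ℂ) : ℝ :=
  if h : A.IsHermitian then ⨆ i, h.eigenvalues i else 0

/-- An orthogonal projection. -/
def IsProjection (P : Matrix n n ℂ) : Prop := P.IsHermitian ∧ P * P = P

/-- A normalized projection `P / rank P`. -/
def IsNormalizedProjection (ρ : Matrix n n ℂ) : Prop :=
  ∃ P : Matrix n n ℂ, IsProjection P ∧ ρ = ((P.rank : ℂ))⁻¹ • P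

def TracePreserving (T : Matrix n n ℂ → Matrix n n ℂ) : Prop :=
  ∀ X, (T X).trace = X.trace

def PositiveMap (T : Matrix n n ℂ → Matrix n n ℂ) : Prop :=
  ∀ X, X.PosSemidef → (T X).PosSemidef

/-- The ampliation `T ⊗ id` acting blockwise. -/
def ampl (T : Matrix n n ℂ → Matrix n n ℂ) {k : Type*} [Fintype k] [DecidableEq k]
    (X : Matrix (n × k) (n × k) ℂ) : Matrix (n × k) (n × k) ℂ :=
  fun p q => T (fun a b => X (a, p.2) (b, q.2)) p.1 q.1

def CompletelyPositive (T : Matrix n n ℂ → Matrix n n ℂ) : Prop :=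
  ∀ (N : ℕ) (X : Matrix (n × Fin N) (n × Fin N) ℂ), X.PosSemidef → (ampl T X).PosSemidef

def IsChannel (T : Matrix n n ℂ → Matrix n n ℂ) : Prop :=
  IsLinearMap ℂ T ∧ CompletelyPositive T ∧ TracePreserving T

/-- Minimal output Renyi α-entropy. -/
noncomputable def minOut (T : Matrix n n ℂ → Matrix n n ℂ) (α : ℝ) : ℝ :=
  sInf {x | ∃ ρ, IsDensity ρ ∧ x = renyi (T ρ) α}

/-- Maximal output von Neumann entropy. -/
noncomputable def maxVN (T : Matrix n n ℂ → Matrix n n ℂ) : ℝ :=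
  sSup {x | ∃ ρ, IsDensity ρ ∧ x = vN (T ρ)}

/-- Holevo capacity. -/
noncomputable def holevoCap (T : Matrix n n ℂ → Matrix n n ℂ) : ℝ :=
  sSup {x | ∃ (k : ℕ) (p : Fin k → ℝ) (σ : Fin k → Matrix n n ℂ),
    (∀ i, 0 ≤ p i) ∧ (∑ i, p i = 1) ∧ (∀ i, IsDensity (σ i)) ∧
    x = vN (T (∑ i, (p i : ℂ) • σ i)) - ∑ i, p i * vN (T (σ i))}

/-- Tensor product of matrices indexed by a finite family. -/
def tensorMatrix {N : ℕ} {d : Fin N → Type*} [∀ i, Fintype (d i)] [∀ i, DecidableEq (d i)]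
    (A : ∀ i, Matrix (d i) (d i) ℂ) : Matrix (∀ i, d i) (∀ i, d i) ℂ :=
  fun p q => ∏ i, A i (p i) (q i)

/-- The flip (swap) operator on `ℂ^n ⊗ ℂ^n`. -/
def flipMat : Matrix (n × n) (n × n) ℂ :=
  fun p q => if p.1 = q.2 ∧ p.2 = q.1 then 1 else 0

/-- Partial transpose on the second tensor factor. -/
def pt2 {a b : Type*} (X : Matrix (a × b) (a × b) ℂ) : Matrix (a × b) (a × b) ℂ :=
  fun p q => X (p.1, q.2) (q.1, p.2)

end

section AuxLemmas

open Polynomial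

variable {m : Type*} [Fintype m] [DecidableEq m]

private lemma sum_pi_prod {N : ℕ} {d : Fin N → Type*} [∀ i, Fintype (d i)]
    [∀ i, DecidableEq (d i)] {R : Type*} [CommSemiring R] (f : ∀ i, d i → R) :
    ∑ r : ∀ i, d i, ∏ i, f i (r i) = ∏ i, ∑ j, f i j := by
  rw [Finset.prod_univ_sum, Fintype.piFinset_univ]

private lemma tensorMatrix_mul {N : ℕ} {d : Fin N → Type*} [∀ i, Fintype (d i)]
    [∀ i, DecidableEq (d i)] (A B : ∀ i, Matrix (d i) (d i) ℂ) :
    tensorMatrix A * tensorMatrix B = tensorMatrix (fun i => A i * B i) := by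
  ext p q
  simp only [Matrix.mul_apply, tensorMatrix, ← Finset.prod_mul_distrib]
  rw [sum_pi_prod (f := fun i j => A i (p i) j * B i j (q i))]

private lemma tensorMatrix_conjTranspose {N : ℕ} {d : Fin N → Type*} [∀ i, Fintype (d i)]
    [∀ i, DecidableEq (d i)] (A : ∀ i, Matrix (d i) (d i) ℂ) :
    (tensorMatrix A)ᴴ = tensorMatrix (fun i => (A i)ᴴ) := by
  ext p q
  simp only [Matrix.conjTranspose_apply, tensorMatrix]
  exact map_prod (starRingEnd ℂ) _ _

private lemma tensorMatrix_diagonal {N : ℕ} {d : Fin N → Type*} [∀ i, Fintype (d i)]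
    [∀ i, DecidableEq (d i)] (v : ∀ i, d i → ℂ) :
    tensorMatrix (fun i => Matrix.diagonal (v i))
      = Matrix.diagonal (fun p => ∏ i, v i (p i)) := by
  ext p q
  by_cases h : p = q
  · subst h; simp [tensorMatrix]
  · obtain ⟨i, hi⟩ := Function.ne_iff.mp h
    rw [Matrix.diagonal_apply_ne _ h]
    exact Finset.prod_eq_zero (Finset.mem_univ i) (Matrix.diagonal_apply_ne _ hi)

private lemma tensorMatrix_one {N : ℕ} {d : Fin N → Type*} [∀ i, Fintype (d i)]
    [∀ i, DecidableEq (d i)] :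
    tensorMatrix (fun i => (1 : Matrix (d i) (d i) ℂ)) = 1 := by
  simp only [← Matrix.diagonal_one, tensorMatrix_diagonal]
  simp

private lemma charpoly_conj {k : Type*} [Fintype k] [DecidableEq k]
    (V D : Matrix k k ℂ) (hV : V * Vᴴ = 1) :
    (V * D * Vᴴ).charpoly = D.charpoly := by
  have hscalar : (Matrix.scalar k (X : ℂ[X])) = (X : ℂ[X]) • (1 : Matrix k k ℂ[X]) := by
    ext i j
    by_cases h : i = j
    · subst h; simp [Matrix.scalar_apply, Matrix.one_apply]
    · simp [Matrix.scalar_apply, Matrix.diagonal_apply_ne _ h, Matrix.one_apply_ne h]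
  have hcm : Matrix.charmatrix (V * D * Vᴴ)
      = V.map (C : ℂ →+* ℂ[X]) * Matrix.charmatrix D * Vᴴ.map (C : ℂ →+* ℂ[X]) := by
    unfold Matrix.charmatrix
    rw [mul_sub, sub_mul]
    congr 1
    · rw [hscalar, Matrix.mul_smul, Matrix.smul_mul, mul_one, ← Matrix.map_mul, hV,
        Matrix.map_one _ (map_zero C) (map_one C)]
    · simp only [RingHom.mapMatrix_apply]
      rw [← Matrix.map_mul, ← Matrix.map_mul]
  unfold Matrix.charpoly
  rw [hcm, Matrix.det_mul, Matrix.det_mul, mul_right_comm, ← Matrix.det_mul,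
    ← Matrix.map_mul, hV, Matrix.map_one _ (map_zero C) (map_one C), Matrix.det_one, one_mul]

private lemma charpoly_diag {k : Type*} [Fintype k] [DecidableEq k] (v : k → ℂ) :
    (Matrix.diagonal v).charpoly = ∏ i, (X - C (v i)) := by
  have h : Matrix.charmatrix (Matrix.diagonal v)
      = Matrix.diagonal (fun i => (X : ℂ[X]) - C (v i)) := by
    ext i j
    by_cases hij : i = j
    · subst hij; simp
    · rw [Matrix.charmatrix_apply_ne _ _ _ hij, Matrix.diagonal_apply_ne _ hij,
        Matrix.diagonal_apply_ne _ hij, map_zero, neg_zero]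
  unfold Matrix.charpoly
  rw [h, Matrix.det_diagonal]

private lemma eig_sum_eq {k : Type*} [Fintype k] [DecidableEq k]
    {ρ U : Matrix k k ℂ} {μ : k → ℝ} (hρ : ρ.IsHermitian) (hU : U * Uᴴ = 1)
    (hdec : ρ = U * Matrix.diagonal (fun i => ((μ i : ℝ) : ℂ)) * Uᴴ) (g : ℝ → ℝ) :
    ∑ i, g (hρ.eigenvalues i) = ∑ i, g (μ i) := by
  classical
  have hU0 : (hρ.eigenvectorUnitary : Matrix k k ℂ)
      * (hρ.eigenvectorUnitary : Matrix k k ℂ)ᴴ = 1 := by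
    rw [← Matrix.star_eq_conjTranspose]
    exact Matrix.mem_unitaryGroup_iff.mp hρ.eigenvectorUnitary.2
  have hspec : ρ = (hρ.eigenvectorUnitary : Matrix k k ℂ)
      * Matrix.diagonal (fun i => ((hρ.eigenvalues i : ℝ) : ℂ))
      * (hρ.eigenvectorUnitary : Matrix k k ℂ)ᴴ := by
    rw [← Matrix.star_eq_conjTranspose]
    exact hρ.spectral_theorem
  have l1 : ∀ c : k → ℂ, (Finset.univ.val.map fun i => (X : ℂ[X]) - C (c i))
      = (Finset.univ.val.map c).map (fun a => (X : ℂ[X]) - C a) := by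
    intro c; rw [Multiset.map_map]; rfl
  have e1 : ρ.charpoly = ∏ i, ((X : ℂ[X]) - C ((hρ.eigenvalues i : ℝ) : ℂ)) := by
    conv_lhs => rw [hspec]
    rw [charpoly_conj _ _ hU0, charpoly_diag]
  have e2 : ρ.charpoly = ∏ i, ((X : ℂ[X]) - C ((μ i : ℝ) : ℂ)) := by
    conv_lhs => rw [hdec]
    rw [charpoly_conj _ _ hU, charpoly_diag]
  have h3 := e1.symm.trans e2
  have h4 : Finset.univ.val.map (fun i => ((hρ.eigenvalues i : ℝ) : ℂ))
      = Finset.univ.val.map (fun i => ((μ i : ℝ) : ℂ)) := by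
    have hr := congrArg Polynomial.roots h3
    rwa [Finset.prod_eq_multiset_prod, Finset.prod_eq_multiset_prod, l1, l1,
      Polynomial.roots_multiset_prod_X_sub_C, Polynomial.roots_multiset_prod_X_sub_C] at hr
  have h5 : Finset.univ.val.map hρ.eigenvalues = Finset.univ.val.map μ := by
    have := congrArg (Multiset.map Complex.re) h4
    simpa [Multiset.map_map, Function.comp_def] using this
  have l2 : ∀ (c : k → ℝ), (Finset.univ.val.map fun i => g (c i))
      = (Finset.univ.val.map c).map g := by
    intro c; rw [Multiset.map_map]; rfl
  rw [Finset.sum_eq_multiset_sum, Finset.sum_eq_multiset_sum, l2, l2, h5]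

private lemma tensor_spectral {N : ℕ} {σ : Matrix m m ℂ} (hσ : σ.IsHermitian) :
    ∃ U : Matrix (Fin N → m) (Fin N → m) ℂ, U * Uᴴ = 1 ∧
      tensorMatrix (fun _ : Fin N => σ)
        = U * Matrix.diagonal (fun p : Fin N → m => ((∏ i, hσ.eigenvalues (p i) : ℝ) : ℂ)) * Uᴴ := by
  classical
  set U0 : Matrix m m ℂ := (hσ.eigenvectorUnitary : Matrix m m ℂ) with hU0def
  have hU0 : U0 * U0ᴴ = 1 := by
    rw [← Matrix.star_eq_conjTranspose]
    exact Matrix.mem_unitaryGroup_iff.mp hσ.eigenvectorUnitary.2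
  have hspec : σ = U0 * Matrix.diagonal (fun i => ((hσ.eigenvalues i : ℝ) : ℂ)) * U0ᴴ := by
    rw [← Matrix.star_eq_conjTranspose]
    exact hσ.spectral_theorem
  refine ⟨tensorMatrix (fun _ : Fin N => U0), ?_, ?_⟩
  · rw [tensorMatrix_conjTranspose, tensorMatrix_mul]
    simp only [hU0]
    exact tensorMatrix_one
  · have hdiag : Matrix.diagonal (fun p : Fin N → m => ((∏ i, hσ.eigenvalues (p i) : ℝ) : ℂ))
        = tensorMatrix (fun _ : Fin N =>
            Matrix.diagonal (fun i => ((hσ.eigenvalues i : ℝ) : ℂ))) := by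
      have hc : (fun p : Fin N → m => ((∏ i, hσ.eigenvalues (p i) : ℝ) : ℂ))
          = fun p => ∏ i, ((hσ.eigenvalues (p i) : ℝ) : ℂ) := by
        funext p; exact Complex.ofReal_prod _ _
      rw [tensorMatrix_diagonal, hc]
    rw [hdiag, tensorMatrix_conjTranspose, tensorMatrix_mul, tensorMatrix_mul]
    exact congrArg tensorMatrix (funext fun _ => hspec)

private lemma tensor_herm {N : ℕ} {σ : Matrix m m ℂ} (hσ : σ.IsHermitian) :
    (tensorMatrix fun _ : Fin N => σ).IsHermitian := by
  obtain ⟨U, hU, hdec⟩ := tensor_spectral (N := N) hσ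
  rw [hdec]
  show _ᴴ = _
  simp only [Matrix.conjTranspose_mul, Matrix.conjTranspose_conjTranspose,
    Matrix.diagonal_conjTranspose]
  have : star (fun p : Fin N → m => ((∏ i, hσ.eigenvalues (p i) : ℝ) : ℂ))
      = fun p : Fin N → m => ((∏ i, hσ.eigenvalues (p i) : ℝ) : ℂ) := by
    funext p
    simp [Pi.star_apply, Complex.conj_ofReal]
  rw [this, Matrix.mul_assoc]

private lemma tensor_eig_sum {N : ℕ} {σ : Matrix m m ℂ} (hσ : σ.IsHermitian)
    (hN : (tensorMatrix fun _ : Fin N => σ).IsHermitian) (g : ℝ → ℝ) :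
    ∑ p, g (hN.eigenvalues p) = ∑ p : Fin N → m, g (∏ i, hσ.eigenvalues (p i)) := by
  obtain ⟨U, hU, hdec⟩ := tensor_spectral (N := N) hσ
  exact eig_sum_eq hN hU hdec g

private lemma psd_of_decomp {k : Type*} [Fintype k] [DecidableEq k]
    (U : Matrix k k ℂ) {v : k → ℝ} (hv : ∀ i, 0 ≤ v i) :
    (U * Matrix.diagonal (fun i => ((v i : ℝ) : ℂ)) * Uᴴ).PosSemidef := by
  refine Matrix.PosSemidef.mul_mul_conjTranspose_same ?_ U
  exact Matrix.posSemidef_diagonal_iff.mpr fun i => by exact_mod_cast hv i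

private lemma tensor_psd {N : ℕ} {σ : Matrix m m ℂ} (hσ : σ.PosSemidef) :
    (tensorMatrix fun _ : Fin N => σ).PosSemidef := by
  obtain ⟨U, hU, hdec⟩ := tensor_spectral (N := N) hσ.1
  rw [hdec]
  exact psd_of_decomp U fun p => Finset.prod_nonneg fun i _ => hσ.eigenvalues_nonneg _

private lemma sum_eig_eq_one {σ : Matrix m m ℂ} (hσ : σ.IsHermitian) (htr : σ.trace = 1) :
    ∑ i, hσ.eigenvalues i = 1 := by
  have h : σ.trace = ∑ i, (hσ.eigenvalues i : ℂ) := by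
    exact hσ.trace_eq_sum_eigenvalues
  rw [htr] at h
  have h2 : ((1 : ℝ) : ℂ) = ((∑ i, hσ.eigenvalues i : ℝ) : ℂ) := by
    rw [Complex.ofReal_sum]
    exact_mod_cast h
  exact (Complex.ofReal_inj.mp h2).symm

private lemma prod_g {ι : Type*} (g : ℝ → ℝ) (hg1 : g 1 = 1)
    (hgmul : ∀ x y, 0 ≤ x → 0 ≤ y → g (x * y) = g x * g y)
    (s : Finset ι) (f : ι → ℝ) (hf : ∀ i, 0 ≤ f i) :
    g (∏ i ∈ s, f i) = ∏ i ∈ s, g (f i) := by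
  classical
  induction s using Finset.cons_induction with
  | empty => simpa using hg1
  | cons a s ha ih =>
    rw [Finset.prod_cons, Finset.prod_cons,
      hgmul _ _ (hf a) (Finset.prod_nonneg fun i _ => hf i), ih]

private lemma sum_prod_g_mult {N : ℕ} (g : ℝ → ℝ) (hg1 : g 1 = 1)
    (hgmul : ∀ x y, 0 ≤ x → 0 ≤ y → g (x * y) = g x * g y)
    (lam : m → ℝ) (h0 : ∀ i, 0 ≤ lam i) :
    ∑ p : Fin N → m, g (∏ i, lam (p i)) = (∑ i, g (lam i)) ^ N := by
  have h : ∀ p : Fin N → m, g (∏ i, lam (p i)) = ∏ i, g (lam (p i)) :=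
    fun p => prod_g g hg1 hgmul _ _ fun i => h0 _
  simp_rw [h]
  rw [Finset.sum_pow', Fintype.piFinset_univ]

private lemma xlogx_mul (a b : ℝ) (ha : 0 ≤ a) (hb : 0 ≤ b) :
    (a * b) * Real.logb 2 (a * b)
      = a * (b * Real.logb 2 b) + b * (a * Real.logb 2 a) := by
  rcases eq_or_lt_of_le ha with h | h
  · simp [← h]
  rcases eq_or_lt_of_le hb with h' | h'
  · simp [← h']
  rw [Real.logb_mul h.ne' h'.ne']
  ring

private lemma sum_prod_entropy {N : ℕ} (lam : m → ℝ) (h0 : ∀ i, 0 ≤ lam i)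
    (h1 : ∑ i, lam i = 1) :
    ∑ p : Fin N → m, ((∏ i, lam (p i)) * Real.logb 2 (∏ i, lam (p i)))
      = N * ∑ i, lam i * Real.logb 2 (lam i) := by
  induction N with
  | zero => simp
  | succ N ih =>
    have hB : ∑ p : Fin N → m, ∏ i, lam (p i) = 1 := by
      have := sum_prod_g_mult (N := N) (fun x => x) rfl (fun _ _ _ _ => rfl) lam h0
      simpa [h1] using this
    have e := Fin.consEquiv (fun _ : Fin (N + 1) => m)
    rw [← Equiv.sum_comp (Fin.consEquiv (fun _ : Fin (N + 1) => m))
      (fun p : Fin (N + 1) → m => (∏ i, lam (p i)) * Real.logb 2 (∏ i, lam (p i)))]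
    rw [Fintype.sum_prod_type]
    have hsplit : ∀ (x : m) (p : Fin N → m),
        (∏ i : Fin (N + 1), lam ((Fin.consEquiv (fun _ : Fin (N + 1) => m)) (x, p) i))
          = lam x * ∏ i : Fin N, lam (p i) := by
      intro x p
      rw [Fin.prod_univ_succ]
      simp [Fin.consEquiv]
    simp_rw [hsplit]
    have hterm : ∀ (x : m) (p : Fin N → m),
        (lam x * ∏ i, lam (p i)) * Real.logb 2 (lam x * ∏ i, lam (p i))
          = lam x * ((∏ i, lam (p i)) * Real.logb 2 (∏ i, lam (p i)))
            + (∏ i, lam (p i)) * (lam x * Real.logb 2 (lam x)) :=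
      fun x p => xlogx_mul _ _ (h0 x) (Finset.prod_nonneg fun i _ => h0 _)
    simp_rw [hterm]
    simp only [Finset.sum_add_distrib, ← Finset.mul_sum, ← Finset.sum_mul]
    rw [ih, hB, h1]
    push_cast
    ring

private lemma trPow_tensor {N : ℕ} {σ : Matrix m m ℂ} (hσ : σ.PosSemidef) (γ : ℝ) :
    trPow (tensorMatrix fun _ : Fin N => σ) γ = trPow σ γ ^ N := by
  have hN := tensor_herm (N := N) hσ.1
  rw [trPow, dif_pos hN, trPow, dif_pos hσ.1]
  have ht := tensor_eig_sum hσ.1 hN (fun x => if x = 0 then 0 else x ^ γ)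
  rw [show (∑ p, if hN.eigenvalues p = 0 then (0:ℝ) else hN.eigenvalues p ^ γ)
      = ∑ p, (fun x => if x = 0 then (0:ℝ) else x ^ γ) (hN.eigenvalues p) from rfl, ht]
  exact sum_prod_g_mult (fun x => if x = 0 then (0:ℝ) else x ^ γ)
    (by norm_num) (fun x y hx hy => by
      by_cases hx0 : x = 0
      · simp [hx0]
      by_cases hy0 : y = 0
      · simp [hy0]
      · rw [if_neg hx0, if_neg hy0, if_neg (mul_ne_zero hx0 hy0), Real.mul_rpow hx hy])
    hσ.1.eigenvalues hσ.eigenvalues_nonneg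

private lemma vN_tensor {N : ℕ} {σ : Matrix m m ℂ} (hσ : IsDensity σ) :
    vN (tensorMatrix fun _ : Fin N => σ) = N * vN σ := by
  have hH := hσ.1.1
  have hN := tensor_herm (N := N) hH
  rw [vN, dif_pos hN, vN, dif_pos hH]
  have ht := tensor_eig_sum hH hN (fun x => x * Real.logb 2 x)
  rw [show (∑ p, hN.eigenvalues p * Real.logb 2 (hN.eigenvalues p))
      = ∑ p, (fun x => x * Real.logb 2 x) (hN.eigenvalues p) from rfl, ht]
  rw [sum_prod_entropy _ hσ.1.eigenvalues_nonneg (sum_eig_eq_one hH hσ.2)]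
  ring

private lemma renyi_tensor {N : ℕ} {σ : Matrix m m ℂ} (hσ : IsDensity σ) (γ : ℝ) :
    renyi (tensorMatrix fun _ : Fin N => σ) γ = N * renyi σ γ := by
  by_cases hγ : γ = 1
  · subst hγ
    rw [renyi, if_pos rfl, renyi, if_pos rfl, vN_tensor hσ]
  · rw [renyi, if_neg hγ, renyi, if_neg hγ, trPow_tensor hσ.1, Real.logb_pow]
    ring

private lemma trPow_filter {σ : Matrix m m ℂ} (hH : σ.IsHermitian) (γ : ℝ) :
    trPow σ γ
      = ∑ i ∈ Finset.univ.filter (fun i => hH.eigenvalues i ≠ 0), hH.eigenvalues i ^ γ := by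
  rw [trPow, dif_pos hH, Finset.sum_filter]
  refine Finset.sum_congr rfl fun i _ => ?_
  by_cases h : hH.eigenvalues i = 0 <;> simp [h]

private lemma renyi_anti {σ : Matrix m m ℂ} (hσ : IsDensity σ) {β α : ℝ} (hβα : β < α) :
    renyi σ α ≤ renyi σ β := by
  classical
  obtain ⟨hpsd, htr⟩ := hσ
  have hH : σ.IsHermitian := hpsd.1
  set lam := hH.eigenvalues with hlamdef
  have h0 : ∀ i, 0 ≤ lam i := hpsd.eigenvalues_nonneg
  have h1 : ∑ i, lam i = 1 := sum_eig_eq_one hH htr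
  set s : Finset m := Finset.univ.filter (fun i => lam i ≠ 0) with hsdef
  have hmem : ∀ i ∈ s, 0 < lam i := by
    intro i hi
    rcases (h0 i).lt_or_eq with h | h
    · exact h
    · exact absurd h.symm (Finset.mem_filter.mp hi).2
  have h1s : ∑ i ∈ s, lam i = 1 := by
    rw [hsdef, Finset.sum_filter_ne_zero]; exact h1
  have hf : ∀ γ : ℝ, trPow σ γ = ∑ i ∈ s, lam i ^ γ := fun γ => trPow_filter hH γ
  have hsne : s.Nonempty := by
    rcases Finset.eq_empty_or_nonempty s with h | h
    · rw [h, Finset.sum_empty] at h1s; norm_num at h1s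
    · exact h
  have hfpos : ∀ γ : ℝ, 0 < ∑ i ∈ s, lam i ^ γ :=
    fun γ => Finset.sum_pos (fun i hi => Real.rpow_pos_of_pos (hmem i hi) _) hsne
  set L : ℝ := ∑ i ∈ s, lam i * Real.log (lam i) with hLdef
  have hlog2 : (0:ℝ) < Real.log 2 := Real.log_pos one_lt_two
  have hkey : ∀ (γ : ℝ) (i), i ∈ s → lam i * lam i ^ (γ - 1) = lam i ^ γ := by
    intro γ i hi
    have h := (Real.rpow_add (hmem i hi) 1 (γ - 1)).symm
    rw [Real.rpow_one] at h
    rw [h]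
    norm_num
  have hvN : vN σ = -(L / Real.log 2) := by
    rw [vN, dif_pos hH]
    congr 1
    rw [hLdef, Finset.sum_div]
    rw [← Finset.sum_filter_of_ne
      (p := fun i => lam i ≠ 0) (f := fun i => lam i * Real.logb 2 (lam i)) ?_]
    · exact Finset.sum_congr rfl fun i _ => by rw [Real.logb, mul_div_assoc]
    · intro i _ hne h
      exact hne (by simp [h])
  have J1 : ∀ γ : ℝ, (γ - 1) * L ≤ Real.log (∑ i ∈ s, lam i ^ γ) := by
    intro γ
    have hj := (strictConcaveOn_log_Ioi.concaveOn).le_map_sum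
      (t := s) (w := lam) (p := fun i => lam i ^ (γ - 1))
      (fun i _ => h0 i) h1s
      (fun i hi => Set.mem_Ioi.mpr (Real.rpow_pos_of_pos (hmem i hi) _))
    have e1 : ∑ i ∈ s, lam i • Real.log (lam i ^ (γ - 1)) = (γ - 1) * L := by
      rw [hLdef, Finset.mul_sum]
      refine Finset.sum_congr rfl fun i hi => ?_
      rw [smul_eq_mul, Real.log_rpow (hmem i hi)]
      ring
    have e2 : ∑ i ∈ s, lam i • lam i ^ (γ - 1) = ∑ i ∈ s, lam i ^ γ :=
      Finset.sum_congr rfl fun i hi => by rw [smul_eq_mul, hkey γ i hi]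
    rw [e1, e2] at hj
    exact hj
  have J2 : ∀ γ c : ℝ, 1 ≤ c →
      (∑ i ∈ s, lam i ^ γ) ^ c ≤ ∑ i ∈ s, lam i ^ ((γ - 1) * c + 1) := by
    intro γ c hc
    have hj := (convexOn_rpow hc).map_sum_le (t := s) (w := lam)
      (p := fun i => lam i ^ (γ - 1)) (fun i _ => h0 i) h1s
      (fun i hi => Set.mem_Ici.mpr (Real.rpow_pos_of_pos (hmem i hi) _).le)
    have e2 : ∑ i ∈ s, lam i • lam i ^ (γ - 1) = ∑ i ∈ s, lam i ^ γ :=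
      Finset.sum_congr rfl fun i hi => by rw [smul_eq_mul, hkey γ i hi]
    have e3 : ∑ i ∈ s, lam i • (lam i ^ (γ - 1)) ^ c = ∑ i ∈ s, lam i ^ ((γ - 1) * c + 1) := by
      refine Finset.sum_congr rfl fun i hi => ?_
      rw [smul_eq_mul, ← Real.rpow_mul (h0 i), Real.rpow_add (hmem i hi) ((γ - 1) * c) 1,
        Real.rpow_one]
      exact mul_comm _ _
    rw [e2, e3] at hj
    exact hj
  have hrenyi : ∀ γ : ℝ, γ ≠ 1 →
      renyi σ γ = (1 - γ)⁻¹ * (Real.log (∑ i ∈ s, lam i ^ γ) / Real.log 2) := by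
    intro γ hγ
    rw [renyi, if_neg hγ, hf γ, Real.logb]
  have piece1 : ∀ γ : ℝ, γ < 1 → vN σ ≤ renyi σ γ := by
    intro γ hγ
    have h1γ : 0 < 1 - γ := by linarith
    have hJ := J1 γ
    have hle : -L ≤ (1 - γ)⁻¹ * Real.log (∑ i ∈ s, lam i ^ γ) := by
      rw [inv_mul_eq_div, le_div_iff₀ h1γ]
      nlinarith [hJ]
    rw [hrenyi γ (by linarith), hvN]
    calc -(L / Real.log 2) = (-L) / Real.log 2 := by ring
      _ ≤ ((1 - γ)⁻¹ * Real.log (∑ i ∈ s, lam i ^ γ)) / Real.log 2 := by gcongr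
      _ = (1 - γ)⁻¹ * (Real.log (∑ i ∈ s, lam i ^ γ) / Real.log 2) := by ring
  have piece2 : ∀ γ : ℝ, 1 < γ → renyi σ γ ≤ vN σ := by
    intro γ hγ
    have h1γ : 0 < γ - 1 := by linarith
    have hJ := J1 γ
    have hle : (1 - γ)⁻¹ * Real.log (∑ i ∈ s, lam i ^ γ) ≤ -L := by
      have hrw : (1 - γ)⁻¹ = -((γ - 1)⁻¹) := by
        rw [show (1 - γ) = -(γ - 1) by ring, inv_neg]
      rw [hrw, neg_mul, neg_le_neg_iff, inv_mul_eq_div, le_div_iff₀ h1γ]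
      nlinarith [hJ]
    rw [hrenyi γ (by linarith), hvN]
    calc (1 - γ)⁻¹ * (Real.log (∑ i ∈ s, lam i ^ γ) / Real.log 2)
        = ((1 - γ)⁻¹ * Real.log (∑ i ∈ s, lam i ^ γ)) / Real.log 2 := by ring
      _ ≤ (-L) / Real.log 2 := by gcongr
      _ = -(L / Real.log 2) := by ring
  rcases lt_trichotomy α 1 with hα1 | hα1 | hα1
  · -- β < α < 1
    have h1α : 0 < 1 - α := by linarith
    have h1β : 0 < 1 - β := by linarith
    set c : ℝ := (1 - β) / (1 - α) with hcdef
    have hc : 1 ≤ c := by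
      rw [hcdef, le_div_iff₀ h1α]
      linarith
    have hb : (α - 1) * c + 1 = β := by
      rw [hcdef]
      field_simp
      ring
    have hJ := J2 α c hc
    rw [hb] at hJ
    have hlog : c * Real.log (∑ i ∈ s, lam i ^ α) ≤ Real.log (∑ i ∈ s, lam i ^ β) := by
      have hll := Real.log_le_log (Real.rpow_pos_of_pos (hfpos α) c) hJ
      rwa [Real.log_rpow (hfpos α)] at hll
    have hceq : (1 - β)⁻¹ * c = (1 - α)⁻¹ := by
      rw [hcdef]
      field_simp
    have hcore := mul_le_mul_of_nonneg_left hlog (inv_nonneg.mpr h1β.le)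
    rw [← mul_assoc, hceq] at hcore
    rw [hrenyi α (by linarith), hrenyi β (by linarith)]
    calc (1 - α)⁻¹ * (Real.log (∑ i ∈ s, lam i ^ α) / Real.log 2)
        = ((1 - α)⁻¹ * Real.log (∑ i ∈ s, lam i ^ α)) / Real.log 2 := by ring
      _ ≤ ((1 - β)⁻¹ * Real.log (∑ i ∈ s, lam i ^ β)) / Real.log 2 := by gcongr
      _ = (1 - β)⁻¹ * (Real.log (∑ i ∈ s, lam i ^ β) / Real.log 2) := by ring
  · -- α = 1
    rw [hα1, renyi, if_pos rfl]
    exact piece1 β (by linarith)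
  · rcases lt_trichotomy β 1 with hβ1 | hβ1 | hβ1
    · exact (piece2 α hα1).trans (piece1 β hβ1)
    · have hr1 : renyi σ 1 = vN σ := by rw [renyi]; simp
      rw [hβ1, hr1]
      exact piece2 α hα1
    · -- 1 < β < α
      have hbm : 0 < β - 1 := by linarith
      have ham : 0 < α - 1 := by linarith
      set c : ℝ := (α - 1) / (β - 1) with hcdef
      have hc : 1 ≤ c := by
        rw [hcdef, le_div_iff₀ hbm]
        linarith
      have hb : (β - 1) * c + 1 = α := by
        rw [hcdef]
        field_simp
        ring
      have hJ := J2 β c hc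
      rw [hb] at hJ
      have hlog : c * Real.log (∑ i ∈ s, lam i ^ β) ≤ Real.log (∑ i ∈ s, lam i ^ α) := by
        have hll := Real.log_le_log (Real.rpow_pos_of_pos (hfpos β) c) hJ
        rwa [Real.log_rpow (hfpos β)] at hll
      have hceq : (α - 1)⁻¹ * c = (β - 1)⁻¹ := by
        rw [hcdef]
        field_simp
      have hcore := mul_le_mul_of_nonneg_left hlog (inv_nonneg.mpr ham.le)
      rw [← mul_assoc, hceq] at hcore
      have hrwa : (1 - α)⁻¹ = -((α - 1)⁻¹) := by
        rw [show (1 - α) = -(α - 1) by ring, inv_neg]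
      have hrwb : (1 - β)⁻¹ = -((β - 1)⁻¹) := by
        rw [show (1 - β) = -(β - 1) by ring, inv_neg]
      rw [hrenyi α (by linarith), hrenyi β (by linarith), hrwa, hrwb]
      calc -(α - 1)⁻¹ * (Real.log (∑ i ∈ s, lam i ^ α) / Real.log 2)
          = -(((α - 1)⁻¹ * Real.log (∑ i ∈ s, lam i ^ α)) / Real.log 2) := by ring
        _ ≤ -(((β - 1)⁻¹ * Real.log (∑ i ∈ s, lam i ^ β)) / Real.log 2) := by
            rw [neg_le_neg_iff]
            gcongr
        _ = -(β - 1)⁻¹ * (Real.log (∑ i ∈ s, lam i ^ β) / Real.log 2) := by ring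

private lemma renyi_nonneg' {σ : Matrix m m ℂ} (hσ : IsDensity σ) (γ : ℝ) :
    0 ≤ renyi σ γ := by
  classical
  obtain ⟨hpsd, htr⟩ := hσ
  have hH : σ.IsHermitian := hpsd.1
  set lam := hH.eigenvalues with hlamdef
  have h0 : ∀ i, 0 ≤ lam i := hpsd.eigenvalues_nonneg
  have h1 : ∑ i, lam i = 1 := sum_eig_eq_one hH htr
  have hle1 : ∀ i, lam i ≤ 1 := by
    intro i
    rw [← h1]
    exact Finset.single_le_sum (fun j _ => h0 j) (Finset.mem_univ i)
  set s : Finset m := Finset.univ.filter (fun i => lam i ≠ 0) with hsdef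
  have hmem : ∀ i ∈ s, 0 < lam i := by
    intro i hi
    rcases (h0 i).lt_or_eq with h | h
    · exact h
    · exact absurd h.symm (Finset.mem_filter.mp hi).2
  have h1s : ∑ i ∈ s, lam i = 1 := by
    rw [hsdef, Finset.sum_filter_ne_zero]; exact h1
  have hsne : s.Nonempty := by
    rcases Finset.eq_empty_or_nonempty s with h | h
    · rw [h, Finset.sum_empty] at h1s; norm_num at h1s
    · exact h
  have hfpos : ∀ γ : ℝ, 0 < ∑ i ∈ s, lam i ^ γ :=
    fun γ => Finset.sum_pos (fun i hi => Real.rpow_pos_of_pos (hmem i hi) _) hsne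
  rw [renyi]
  split_ifs with hγ
  · rw [vN, dif_pos hH, neg_nonneg]
    apply Finset.sum_nonpos
    intro i _
    have hlb := Real.logb_nonpos one_lt_two (h0 i) (hle1 i)
    exact mul_nonpos_iff.mpr (Or.inl ⟨h0 i, hlb⟩)
  · rw [trPow_filter hH γ]
    rcases lt_or_gt_of_ne hγ with hlt | hgt
    · have hge1 : 1 ≤ ∑ i ∈ s, lam i ^ γ := by
        rw [← h1s]
        refine Finset.sum_le_sum fun i hi => ?_
        have := Real.rpow_le_rpow_of_exponent_ge (hmem i hi) (hle1 i) hlt.le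
        rwa [Real.rpow_one] at this
      exact mul_nonneg (inv_nonneg.mpr (by linarith)) (Real.logb_nonneg one_lt_two hge1)
    · have hle1' : ∑ i ∈ s, lam i ^ γ ≤ 1 := by
        rw [← h1s]
        refine Finset.sum_le_sum fun i hi => ?_
        have := Real.rpow_le_rpow_of_exponent_ge (hmem i hi) (hle1 i) hgt.le
        rwa [Real.rpow_one] at this
      have hlb := Real.logb_nonpos one_lt_two (hfpos γ).le hle1'
      have hinv : (1 - γ)⁻¹ ≤ 0 := inv_nonpos.mpr (by linarith)
      nlinarith [mul_nonneg (neg_nonneg.mpr hinv) (neg_nonneg.mpr hlb)]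

private lemma renyi_of_unique {σ : Matrix m m ℂ} [Unique m] (hσ : IsDensity σ) (γ : ℝ) :
    renyi σ γ = 0 := by
  have hH := hσ.1.1
  have h1 : hH.eigenvalues default = 1 := by
    have := sum_eig_eq_one hH hσ.2
    rwa [Fintype.sum_unique] at this
  rw [renyi]
  split_ifs with hγ
  · rw [vN, dif_pos hH, Fintype.sum_unique, h1]
    simp
  · rw [trPow, dif_pos hH, Fintype.sum_unique, h1]
    norm_num

private lemma isDensity_output {T : Matrix m m ℂ → Matrix m m ℂ} (hT : IsChannel T)
    {ρ : Matrix m m ℂ} (hρ : IsDensity ρ) : IsDensity (T ρ) := by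
  refine ⟨?_, by rw [hT.2.2 ρ]; exact hρ.2⟩
  have hX : (ρ.submatrix (Prod.fst : m × Fin 1 → m) Prod.fst).PosSemidef :=
    hρ.1.submatrix _
  have hampl := hT.2.1 1 _ hX
  have hTr : T ρ = (ampl T (ρ.submatrix Prod.fst Prod.fst)).submatrix
      (fun a : m => (a, (0 : Fin 1))) (fun a : m => (a, (0 : Fin 1))) := rfl
  rw [hTr]
  exact hampl.submatrix _

private lemma isDensity_tensor {N : ℕ} {σ : Matrix m m ℂ} (hσ : IsDensity σ) :
    IsDensity (tensorMatrix fun _ : Fin N => σ) := by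
  refine ⟨tensor_psd hσ.1, ?_⟩
  have htr : (tensorMatrix fun _ : Fin N => σ).trace = ∏ _i : Fin N, σ.trace := by
    simp only [Matrix.trace, Matrix.diag, tensorMatrix]
    rw [sum_pi_prod (f := fun (_ : Fin N) (j : m) => σ j j)]
  rw [htr, hσ.2]
  simp

private lemma exists_density [Nonempty m] : ∃ ρ : Matrix m m ℂ, IsDensity ρ := by
  refine ⟨Matrix.diagonal (fun _ => (((Fintype.card m : ℝ)⁻¹ : ℝ) : ℂ)), ?_, ?_⟩
  · refine Matrix.posSemidef_diagonal_iff.mpr fun i => ?_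
    have : (0:ℝ) ≤ (Fintype.card m : ℝ)⁻¹ := by positivity
    exact_mod_cast this
  · rw [Matrix.trace_diagonal]
    rw [Finset.sum_const, nsmul_eq_mul]
    have hcard : (Fintype.card m : ℝ) ≠ 0 := by
      simp [Fintype.card_ne_zero]
    push_cast
    rw [Finset.card_univ, mul_inv_cancel₀ (by exact_mod_cast hcard)]

end AuxLemmas

/-- additivity of the minimal output α-entropy implies additivity for the
β-entropy whenever `ν_α(T) = ν_β(T)` with `α > β ≥ 0`. -/
theorem minOut_additivity_transfer {d : Type*} [Fintype d] [DecidableEq d]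
    (T : Matrix d d ℂ → Matrix d d ℂ) (hT : IsChannel T)
    (α β : ℝ) (hβ : 0 ≤ β) (hβα : β < α)
    (heq : minOut T α = minOut T β)
    (TN : ∀ N : ℕ, Matrix (Fin N → d) (Fin N → d) ℂ → Matrix (Fin N → d) (Fin N → d) ℂ)
    (hTNchan : ∀ N, IsChannel (TN N))
    (hTNprod : ∀ (N : ℕ) (A : Fin N → Matrix d d ℂ),
      TN N (tensorMatrix (d := fun _ : Fin N => d) A) = tensorMatrix (fun i => T (A i)))
    (hadd : ∀ N : ℕ, minOut (TN N) α = N * minOut T α) :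
    ∀ N : ℕ, minOut (TN N) β = N * minOut T β := by
  intro N
  by_cases hd : Nonempty d
  · obtain ⟨ρ₀, hρ₀⟩ := exists_density (m := d)
    have hbddb : BddBelow {x | ∃ ρ, IsDensity ρ ∧ x = renyi ((TN N) ρ) β} := by
      refine ⟨0, ?_⟩
      rintro x ⟨ρ, hρ, rfl⟩
      exact renyi_nonneg' (isDensity_output (hTNchan N) hρ) β
    have hbdda : BddBelow {x | ∃ ρ, IsDensity ρ ∧ x = renyi ((TN N) ρ) α} := by
      refine ⟨0, ?_⟩
      rintro x ⟨ρ, hρ, rfl⟩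
      exact renyi_nonneg' (isDensity_output (hTNchan N) hρ) α
    have hSbne : {x | ∃ ρ, IsDensity ρ ∧ x = renyi ((TN N) ρ) β}.Nonempty :=
      ⟨_, ⟨_, isDensity_tensor (N := N) hρ₀, rfl⟩⟩
    have h1 : (N:ℝ) * minOut T β ≤ minOut (TN N) β := by
      have hab : minOut (TN N) α ≤ minOut (TN N) β := by
        refine le_csInf hSbne ?_
        rintro x ⟨ρ, hρ, rfl⟩
        exact le_trans (csInf_le hbdda ⟨ρ, hρ, rfl⟩)
          (renyi_anti (isDensity_output (hTNchan N) hρ) hβα)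
      calc (N:ℝ) * minOut T β = (N:ℝ) * minOut T α := by rw [heq]
        _ = minOut (TN N) α := (hadd N).symm
        _ ≤ minOut (TN N) β := hab
    have key : ∀ x ∈ {x | ∃ ρ, IsDensity ρ ∧ x = renyi (T ρ) β},
        minOut (TN N) β ≤ (N:ℝ) * x := by
      rintro x ⟨ρ, hρ, rfl⟩
      have heq2 : renyi ((TN N) (tensorMatrix fun _ : Fin N => ρ)) β
          = (N:ℝ) * renyi (T ρ) β := by
        rw [hTNprod N (fun _ => ρ)]
        exact renyi_tensor (isDensity_output hT hρ) β
      exact (csInf_le hbddb ⟨_, isDensity_tensor hρ, rfl⟩).trans_eq heq2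
    have h2 : minOut (TN N) β ≤ (N:ℝ) * minOut T β := by
      rcases Nat.eq_zero_or_pos N with rfl | hNpos
      · have hk := key _ ⟨ρ₀, hρ₀, rfl⟩
        simpa using hk
      · have hN0 : (0:ℝ) < N := by exact_mod_cast hNpos
        have hdiv : minOut (TN N) β / N ≤ minOut T β := by
          refine le_csInf ⟨_, ⟨ρ₀, hρ₀, rfl⟩⟩ ?_
          intro x hx
          rw [div_le_iff₀ hN0, mul_comm]
          exact key x hx
        calc minOut (TN N) β = (minOut (TN N) β / N) * N := by field_simp
          _ ≤ minOut T β * N := mul_le_mul_of_nonneg_right hdiv hN0.le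
          _ = (N:ℝ) * minOut T β := mul_comm _ _
    linarith
  · have hde : IsEmpty d := not_nonempty_iff.mp hd
    have hTβ : minOut T β = 0 := by
      rw [minOut, show {x | ∃ ρ, IsDensity ρ ∧ x = renyi (T ρ) β} = (∅ : Set ℝ) from ?_,
        Real.sInf_empty]
      rw [Set.eq_empty_iff_forall_notMem]
      rintro x ⟨ρ, hρ, rfl⟩
      have h2 := hρ.2
      rw [Matrix.trace] at h2
      simp at h2
    rcases Nat.eq_zero_or_pos N with rfl | hNpos
    · rw [hTβ]
      norm_num
      have hρ0 : IsDensity (1 : Matrix (Fin 0 → d) (Fin 0 → d) ℂ) := by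
        constructor
        · exact Matrix.PosSemidef.one
        · rw [Matrix.trace_one]
          simp
      have hne : {x | ∃ ρ, IsDensity ρ ∧ x = renyi ((TN 0) ρ) β}.Nonempty :=
        ⟨_, 1, hρ0, rfl⟩
      apply le_antisymm
      · refine csInf_le ⟨0, ?_⟩ ?_
        · rintro x ⟨ρ, hρ, rfl⟩
          exact renyi_nonneg' (isDensity_output (hTNchan 0) hρ) β
        · exact ⟨1, hρ0, (renyi_of_unique (isDensity_output (hTNchan 0) hρ0) β).symm⟩
      · refine le_csInf hne ?_
        rintro x ⟨ρ, hρ, rfl⟩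
        exact (renyi_of_unique (isDensity_output (hTNchan 0) hρ) β).ge
    · have hempty : IsEmpty (Fin N → d) := ⟨fun p => hde.false (p ⟨0, hNpos⟩)⟩
      rw [hTβ, mul_zero, minOut,
        show {x | ∃ ρ, IsDensity ρ ∧ x = renyi ((TN N) ρ) β} = (∅ : Set ℝ) from ?_,
        Real.sInf_empty]
      rw [Set.eq_empty_iff_forall_notMem]
      rintro x ⟨ρ, hρ, rfl⟩
      have h2 := hρ.2
      rw [Matrix.trace] at h2
      simp at h2
end

section
/- Let M : S(ℂ^d) → S(ℂ^d) be a linear trace-preserving positive map such that some input state is mapped to a pure state, and define T(ρ) = (1_d − M(ρ))/(d−1). Then for all α > 0, the minimal output Renyi α-entropy of T equals log(d−1). -/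
open Matrix BigOperators
open scoped ComplexOrder

section Helpers
open Matrix BigOperators
open scoped ComplexOrder
variable {m : Type*} [Fintype m] [DecidableEq m]


lemma herm_trace_eq_sum {A : Matrix m m ℂ} (hA : A.IsHermitian) :
    A.trace = ∑ i, (hA.eigenvalues i : ℂ) := by
  conv_lhs => rw [hA.spectral_theorem, Unitary.conjStarAlgAut_apply]
  rw [Matrix.trace_mul_cycle, (Matrix.mem_unitaryGroup_iff').mp hA.eigenvectorUnitary.2, one_mul,
    Matrix.trace_diagonal]
  rfl

lemma herm_trace_sq_eq_sum {A : Matrix m m ℂ} (hA : A.IsHermitian) :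
    (A * A).trace = ∑ i, ((hA.eigenvalues i : ℂ)) ^ 2 := by
  have key : (star hA.eigenvectorUnitary : Matrix m m ℂ) * hA.eigenvectorUnitary = 1 :=
    (Matrix.mem_unitaryGroup_iff').mp hA.eigenvectorUnitary.2
  conv_lhs => rw [hA.spectral_theorem, Unitary.conjStarAlgAut_apply]
  simp only [mul_assoc]
  rw [show (star hA.eigenvectorUnitary : Matrix m m ℂ) *
      ((hA.eigenvectorUnitary : Matrix m m ℂ) *
        (diagonal (RCLike.ofReal ∘ hA.eigenvalues) *
          (star hA.eigenvectorUnitary : Matrix m m ℂ))) =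
      diagonal (RCLike.ofReal ∘ hA.eigenvalues) * (star hA.eigenvectorUnitary : Matrix m m ℂ)
    from by rw [← mul_assoc, key, one_mul]]
  rw [Matrix.trace_mul_comm]
  simp only [mul_assoc]
  rw [key, mul_one, diagonal_mul_diagonal, Matrix.trace_diagonal]
  simp [sq]


lemma eig_le_of_smul_one_sub_psd {A : Matrix m m ℂ} (hA : A.IsHermitian) {c : ℝ}
    (h : (((c : ℂ) • 1 - A)).PosSemidef) (i : m) : hA.eigenvalues i ≤ c := by
  set v : m → ℂ := ⇑(hA.eigenvectorBasis i) with hv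
  have hnorm : star v ⬝ᵥ v = 1 := by
    have h1 : ‖hA.eigenvectorBasis i‖ = 1 := hA.eigenvectorBasis.orthonormal.1 i
    have h2 : (inner ℂ (hA.eigenvectorBasis i) (hA.eigenvectorBasis i) : ℂ) = star v ⬝ᵥ v :=
      (EuclideanSpace.inner_eq_star_dotProduct _ _).trans (dotProduct_comm _ _)
    rw [inner_self_eq_norm_sq_to_K, h1] at h2
    simpa using h2.symm
  have h0 := h.dotProduct_mulVec_nonneg v
  rw [sub_mulVec, smul_mulVec, one_mulVec, hA.mulVec_eigenvectorBasis, ← hv,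
    dotProduct_sub, dotProduct_smul, dotProduct_smul, hnorm] at h0
  have h0' : (0 : ℂ) ≤ ((c - hA.eigenvalues i : ℝ) : ℂ) := by
    push_cast
    simpa using h0
  rw [Complex.zero_le_real] at h0'
  linarith

lemma psd_real_smul {A : Matrix m m ℂ} (hA : A.PosSemidef) {r : ℝ} (hr : 0 ≤ r) :
    (((r : ℂ)) • A).PosSemidef := by
  refine .of_dotProduct_mulVec_nonneg ?_ fun x => ?_
  · unfold Matrix.IsHermitian
    rw [conjTranspose_smul, hA.1.eq]
    congr 1
    simp [Complex.star_def, Complex.conj_ofReal]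
  · rw [smul_mulVec, dotProduct_smul, smul_eq_mul]
    exact mul_nonneg (Complex.zero_le_real.mpr hr) (hA.dotProduct_mulVec_nonneg x)

lemma smul_one_sub_psd {A : Matrix m m ℂ} (hA : A.IsHermitian) {c : ℝ}
    (h : ∀ i, hA.eigenvalues i ≤ c) : (((c : ℂ) • 1 - A)).PosSemidef := by
  have key : ((c : ℂ) • 1 - A) =
      (hA.eigenvectorUnitary : Matrix m m ℂ) *
        diagonal (fun i => ((c - hA.eigenvalues i : ℝ) : ℂ)) *
        (star hA.eigenvectorUnitary : Matrix m m ℂ) := by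
    have hUU : (hA.eigenvectorUnitary : Matrix m m ℂ) *
        star (hA.eigenvectorUnitary : Matrix m m ℂ) = 1 :=
      (Matrix.mem_unitaryGroup_iff).mp hA.eigenvectorUnitary.2
    have hdiag : diagonal (fun i => ((c - hA.eigenvalues i : ℝ) : ℂ)) =
        (c : ℂ) • 1 - diagonal (RCLike.ofReal ∘ hA.eigenvalues) := by
      ext i j
      rcases eq_or_ne i j with rfl | hij
      · simp [Matrix.diagonal_apply_eq, Matrix.one_apply_eq]
      · simp [Matrix.diagonal_apply_ne _ hij, Matrix.one_apply_ne hij]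
    conv_lhs => rw [hA.spectral_theorem, Unitary.conjStarAlgAut_apply]
    rw [hdiag, Matrix.mul_sub, Matrix.sub_mul, Matrix.mul_smul, mul_one, Matrix.smul_mul, hUU]
  rw [key]
  have : (diagonal (fun i => ((c - hA.eigenvalues i : ℝ) : ℂ))).PosSemidef := by
    rw [posSemidef_diagonal_iff]
    intro i
    exact Complex.zero_le_real.mpr (by linarith [h i])
  simpa [Matrix.star_eq_conjTranspose] using this.mul_mul_conjTranspose_same (hA.eigenvectorUnitary : Matrix m m ℂ)

end Helpers


lemma renyi_sum_lower {d : ℕ} (hd : 2 ≤ d) (μ : Fin d → ℝ) (hnn : ∀ i, 0 ≤ μ i)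
    (hsum : ∑ i, μ i = 1) (hle : ∀ i, μ i ≤ ((d : ℝ) - 1)⁻¹) {α : ℝ} (hα : 0 < α)
    (hne : α ≠ 1) :
    Real.logb 2 ((d : ℝ) - 1) ≤ (1 - α)⁻¹ * Real.logb 2 (∑ i, if μ i = 0 then 0 else μ i ^ α) := by
  set c : ℝ := ((d : ℝ) - 1)⁻¹ with hcdef
  have hd1 : (1 : ℝ) ≤ (d : ℝ) - 1 := by
    have : (2 : ℝ) ≤ (d : ℝ) := by exact_mod_cast hd
    linarith
  have hc : 0 < c := by positivity
  have hlogc : Real.logb 2 c = -Real.logb 2 ((d : ℝ) - 1) := Real.logb_inv _ _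
  set S : ℝ := ∑ i, if μ i = 0 then 0 else μ i ^ α with hSdef
  obtain ⟨i0, hi0⟩ : ∃ i, μ i ≠ 0 := by
    by_contra h
    push_neg at h
    rw [Finset.sum_congr rfl (fun i _ => h i)] at hsum
    simp at hsum
  have hSnn : ∀ i ∈ Finset.univ, (0:ℝ) ≤ if μ i = 0 then 0 else μ i ^ α := by
    intro i _
    split
    · exact le_refl 0
    · exact Real.rpow_nonneg (hnn i) α
  have hSpos : 0 < S := by
    refine Finset.sum_pos' hSnn ⟨i0, Finset.mem_univ _, ?_⟩
    rw [if_neg hi0]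
    exact Real.rpow_pos_of_pos (lt_of_le_of_ne (hnn i0) (Ne.symm hi0)) α
  rcases hne.lt_or_gt with hlt | hgt
  · -- α < 1
    have hSge : c ^ (α - 1) ≤ S := by
      calc c ^ (α - 1) = (∑ i, μ i) * c ^ (α - 1) := by rw [hsum, one_mul]
        _ = ∑ i, μ i * c ^ (α - 1) := by rw [Finset.sum_mul]
        _ ≤ S := by
            refine Finset.sum_le_sum fun i _ => ?_
            by_cases h : μ i = 0
            · simp [h]
            · rw [if_neg h]
              have hpos : 0 < μ i := lt_of_le_of_ne (hnn i) (Ne.symm h)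
              have h1 : c ^ (α - 1) ≤ μ i ^ (α - 1) :=
                Real.rpow_le_rpow_of_nonpos hpos (hle i) (by linarith)
              have h2 : μ i * (μ i ^ (α - 1)) = μ i ^ α := by
                have h3 := Real.rpow_add hpos 1 (α - 1)
                rw [Real.rpow_one] at h3
                rw [← h3, show (1 : ℝ) + (α - 1) = α by ring]
              calc μ i * c ^ (α - 1) ≤ μ i * μ i ^ (α - 1) :=
                    mul_le_mul_of_nonneg_left h1 (hnn i)
                _ = μ i ^ α := h2
    have hlog : (α - 1) * Real.logb 2 c ≤ Real.logb 2 S := by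
      rw [← Real.logb_rpow_eq_mul_logb_of_pos hc]
      exact Real.logb_le_logb_of_le one_lt_two (Real.rpow_pos_of_pos hc _) hSge
    have hinv : (0:ℝ) ≤ (1 - α)⁻¹ := by
      rw [inv_nonneg]
      linarith
    have := mul_le_mul_of_nonneg_left hlog hinv
    have heq : (1 - α)⁻¹ * ((α - 1) * Real.logb 2 c) = -Real.logb 2 c := by
      have h1α : (1 : ℝ) - α ≠ 0 := by intro h; apply hne; linarith
      field_simp
      ring
    rw [heq] at this
    rw [hlogc] at this
    simpa using this
  · -- 1 < α
    have hSle : S ≤ c ^ (α - 1) := by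
      calc S ≤ ∑ i, μ i * c ^ (α - 1) := by
            refine Finset.sum_le_sum fun i _ => ?_
            by_cases h : μ i = 0
            · simp [h]
            · rw [if_neg h]
              have hpos : 0 < μ i := lt_of_le_of_ne (hnn i) (Ne.symm h)
              have h1 : μ i ^ (α - 1) ≤ c ^ (α - 1) :=
                Real.rpow_le_rpow (le_of_lt hpos) (hle i) (by linarith)
              have h2 : μ i * (μ i ^ (α - 1)) = μ i ^ α := by
                have h3 := Real.rpow_add hpos 1 (α - 1)
                rw [Real.rpow_one] at h3
                rw [← h3, show (1 : ℝ) + (α - 1) = α by ring]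
              calc μ i ^ α = μ i * μ i ^ (α - 1) := h2.symm
                _ ≤ μ i * c ^ (α - 1) := mul_le_mul_of_nonneg_left h1 (hnn i)
        _ = (∑ i, μ i) * c ^ (α - 1) := by rw [Finset.sum_mul]
        _ = c ^ (α - 1) := by rw [hsum, one_mul]
    have hlog : Real.logb 2 S ≤ (α - 1) * Real.logb 2 c := by
      rw [← Real.logb_rpow_eq_mul_logb_of_pos hc]
      exact Real.logb_le_logb_of_le one_lt_two hSpos hSle
    have hinv : (1 - α)⁻¹ ≤ 0 := by
      rw [inv_nonpos]
      linarith
    have := mul_le_mul_of_nonpos_left hlog hinv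
    have heq : (1 - α)⁻¹ * ((α - 1) * Real.logb 2 c) = -Real.logb 2 c := by
      have h1α : (1 : ℝ) - α ≠ 0 := by intro h; apply hne; linarith
      field_simp
      ring
    rw [heq] at this
    rw [hlogc] at this
    simpa using this

lemma vN_sum_lower {d : ℕ} (hd : 2 ≤ d) (μ : Fin d → ℝ) (hnn : ∀ i, 0 ≤ μ i)
    (hsum : ∑ i, μ i = 1) (hle : ∀ i, μ i ≤ ((d : ℝ) - 1)⁻¹) :
    Real.logb 2 ((d : ℝ) - 1) ≤ -∑ i, μ i * Real.logb 2 (μ i) := by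
  set c : ℝ := ((d : ℝ) - 1)⁻¹ with hcdef
  have hd1 : (1 : ℝ) ≤ (d : ℝ) - 1 := by
    have : (2 : ℝ) ≤ (d : ℝ) := by exact_mod_cast hd
    linarith
  have hc : 0 < c := by positivity
  have hlogc : Real.logb 2 c = -Real.logb 2 ((d : ℝ) - 1) := Real.logb_inv _ _
  have key : ∑ i, μ i * Real.logb 2 (μ i) ≤ ∑ i, μ i * Real.logb 2 c := by
    refine Finset.sum_le_sum fun i _ => ?_
    by_cases h : μ i = 0
    · simp [h]
    · have hpos : 0 < μ i := lt_of_le_of_ne (hnn i) (Ne.symm h)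
      exact mul_le_mul_of_nonneg_left
        (Real.logb_le_logb_of_le one_lt_two hpos (hle i)) (hnn i)
  have h2 : ∑ i, μ i * Real.logb 2 c = Real.logb 2 c := by
    rw [← Finset.sum_mul, hsum, one_mul]
  rw [h2] at key
  rw [hlogc] at key
  linarith

lemma exact_sums {d : ℕ} (hd : 2 ≤ d) (μ : Fin d → ℝ) (hnn : ∀ i, 0 ≤ μ i)
    (hsum : ∑ i, μ i = 1) (hle : ∀ i, μ i ≤ ((d : ℝ) - 1)⁻¹)
    (hsq : ∑ i, (μ i) ^ 2 = ((d : ℝ) - 1)⁻¹) :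
    (∀ α : ℝ, ∑ i, (if μ i = 0 then 0 else μ i ^ α) =
        ((d : ℝ) - 1) * (((d : ℝ) - 1)⁻¹) ^ α) ∧
      ∑ i, μ i * Real.logb 2 (μ i) = -Real.logb 2 ((d : ℝ) - 1) := by
  set c : ℝ := ((d : ℝ) - 1)⁻¹ with hcdef
  have hd1 : (1 : ℝ) ≤ (d : ℝ) - 1 := by
    have : (2 : ℝ) ≤ (d : ℝ) := by exact_mod_cast hd
    linarith
  have hd1' : (d : ℝ) - 1 ≠ 0 := by linarith
  have hc : 0 < c := by positivity
  have hzero : ∀ i, μ i * (c - μ i) = 0 := by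
    have h0 : ∑ i, μ i * (c - μ i) = 0 := by
      have : ∀ i, μ i * (c - μ i) = c * μ i - μ i ^ 2 := by intro i; ring
      rw [Finset.sum_congr rfl (fun i _ => this i), Finset.sum_sub_distrib,
        ← Finset.mul_sum, hsum, hsq, mul_one, sub_self]
    intro i
    have := (Finset.sum_eq_zero_iff_of_nonneg (fun i _ =>
      mul_nonneg (hnn i) (by linarith [hle i]))).mp h0 i (Finset.mem_univ i)
    exact this
  have hzc : ∀ i, μ i = 0 ∨ μ i = c := by
    intro i
    rcases mul_eq_zero.mp (hzero i) with h | h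
    · exact Or.inl h
    · exact Or.inr (by linarith)
  set F : Finset (Fin d) := Finset.univ.filter (fun i => μ i ≠ 0) with hF
  have hFc : ∀ i ∈ F, μ i = c := by
    intro i hi
    rcases hzc i with h | h
    · exact absurd h (Finset.mem_filter.mp hi).2
    · exact h
  have hcard : (F.card : ℝ) * c = 1 := by
    have : ∑ i, μ i = ∑ i ∈ F, μ i := by
      rw [hF, Finset.sum_filter_ne_zero]
    rw [this, Finset.sum_congr rfl hFc, Finset.sum_const, nsmul_eq_mul] at hsum
    exact hsum
  have hcardval : (F.card : ℝ) = (d : ℝ) - 1 := by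
    have : c ≠ 0 := ne_of_gt hc
    rw [hcdef, mul_inv_eq_one₀ hd1'] at hcard
    linarith [hcard]
  constructor
  · intro α
    have h1 : ∑ i, (if μ i = 0 then 0 else μ i ^ α) = ∑ i ∈ F, μ i ^ α := by
      rw [hF, Finset.sum_filter]
      refine Finset.sum_congr rfl fun i _ => ?_
      by_cases h : μ i = 0 <;> simp [h]
    rw [h1, Finset.sum_congr rfl (fun i hi => by rw [hFc i hi]), Finset.sum_const,
      nsmul_eq_mul, hcardval]
  · have h1 : ∑ i, μ i * Real.logb 2 (μ i) = ∑ i ∈ F, μ i * Real.logb 2 (μ i) := by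
      rw [hF]
      rw [Finset.sum_filter]
      refine Finset.sum_congr rfl fun i _ => ?_
      by_cases h : μ i = 0 <;> simp [h]
    rw [h1, Finset.sum_congr rfl (fun i hi => by rw [hFc i hi]), Finset.sum_const,
      nsmul_eq_mul, hcardval]
    have : ((d : ℝ) - 1) * (c * Real.logb 2 c) = Real.logb 2 c := by
      rw [hcdef]
      field_simp
    rw [this, Real.logb_inv]

section MainHelpers
open scoped ComplexOrder
open Matrix

lemma renyi_T_ge {d : ℕ} (hd : 2 ≤ d) {A : Matrix (Fin d) (Fin d) ℂ} (hA : A.PosSemidef)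
    (htr : A.trace = 1)
    (hsub : (((((d : ℝ) - 1)⁻¹ : ℝ) : ℂ) • 1 - A).PosSemidef) {α : ℝ} (hα : 0 < α) :
    Real.logb 2 ((d : ℝ) - 1) ≤ renyi A α := by
  have hnn : ∀ i, 0 ≤ hA.1.eigenvalues i := hA.eigenvalues_nonneg
  have hsum : ∑ i, hA.1.eigenvalues i = 1 := by
    have h := herm_trace_eq_sum hA.1
    rw [htr] at h
    exact_mod_cast h.symm
  have hle : ∀ i, hA.1.eigenvalues i ≤ ((d : ℝ) - 1)⁻¹ :=
    eig_le_of_smul_one_sub_psd hA.1 hsub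
  by_cases h1 : α = 1
  · simp only [renyi, if_pos h1, vN, dif_pos hA.1]
    exact vN_sum_lower hd _ hnn hsum hle
  · simp only [renyi, if_neg h1, trPow, dif_pos hA.1]
    exact renyi_sum_lower hd _ hnn hsum hle hα h1

lemma renyi_T_eq {d : ℕ} (hd : 2 ≤ d) {A : Matrix (Fin d) (Fin d) ℂ} (hA : A.PosSemidef)
    (htr : A.trace = 1)
    (hsub : (((((d : ℝ) - 1)⁻¹ : ℝ) : ℂ) • 1 - A).PosSemidef)
    (hsq : (A * A).trace = (((((d : ℝ) - 1)⁻¹ : ℝ)) : ℂ)) {α : ℝ} (hα : 0 < α) :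
    renyi A α = Real.logb 2 ((d : ℝ) - 1) := by
  have hd1 : (1 : ℝ) ≤ (d : ℝ) - 1 := by
    have : (2 : ℝ) ≤ (d : ℝ) := by exact_mod_cast hd
    linarith
  have hdpos : (0 : ℝ) < (d : ℝ) - 1 := by linarith
  have hnn : ∀ i, 0 ≤ hA.1.eigenvalues i := hA.eigenvalues_nonneg
  have hsum : ∑ i, hA.1.eigenvalues i = 1 := by
    have h := herm_trace_eq_sum hA.1
    rw [htr] at h
    exact_mod_cast h.symm
  have hle : ∀ i, hA.1.eigenvalues i ≤ ((d : ℝ) - 1)⁻¹ :=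
    eig_le_of_smul_one_sub_psd hA.1 hsub
  have hsqr : ∑ i, (hA.1.eigenvalues i) ^ 2 = ((d : ℝ) - 1)⁻¹ := by
    have h := herm_trace_sq_eq_sum hA.1
    rw [hsq] at h
    exact_mod_cast h.symm
  obtain ⟨ha, hb⟩ := exact_sums hd _ hnn hsum hle hsqr
  by_cases h1 : α = 1
  · simp only [renyi, if_pos h1, vN, dif_pos hA.1]
    rw [hb]
    ring
  · simp only [renyi, if_neg h1, trPow, dif_pos hA.1]
    rw [ha α]
    have hpow : ((d : ℝ) - 1) * (((d : ℝ) - 1)⁻¹) ^ α = ((d : ℝ) - 1) ^ (1 - α) := by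
      rw [Real.inv_rpow hdpos.le, show (1 : ℝ) - α = 1 + (-α) by ring,
        Real.rpow_add hdpos, Real.rpow_one, Real.rpow_neg hdpos.le]
    rw [hpow, Real.logb_rpow_eq_mul_logb_of_pos hdpos,
      inv_mul_cancel_left₀ (sub_ne_zero_of_ne (Ne.symm h1))]

end MainHelpers

/-- for `T(ρ) = (1 - M(ρ))/(d-1)` with `M` positive trace-preserving mapping
some state to a pure state, the minimal output α-entropy is `log (d-1)` for all `α > 0`. -/
theorem minOut_generalized_WernerHolevo {d : ℕ} (hd : 2 ≤ d)
    (M : Matrix (Fin d) (Fin d) ℂ → Matrix (Fin d) (Fin d) ℂ)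
    (hlin : IsLinearMap ℂ M) (hTP : TracePreserving M) (hpos : PositiveMap M)
    (hpure : ∃ ρ₀, IsDensity ρ₀ ∧ IsProjection (M ρ₀) ∧ (M ρ₀).rank = 1) :
    ∀ α : ℝ, 0 < α →
      minOut (fun ρ => ((d : ℂ) - 1)⁻¹ • (1 - M ρ)) α = Real.logb 2 ((d : ℝ) - 1) := by
  intro α hα
  have hd1 : (1 : ℝ) ≤ (d : ℝ) - 1 := by
    have : (2 : ℝ) ≤ (d : ℝ) := by exact_mod_cast hd
    linarith
  have hdpos : (0 : ℝ) < (d : ℝ) - 1 := by linarith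
  have hcnn : (0 : ℝ) ≤ ((d : ℝ) - 1)⁻¹ := by positivity
  have hdc : ((d : ℂ) - 1)⁻¹ = (((((d : ℝ) - 1)⁻¹ : ℝ)) : ℂ) := by push_cast; ring
  have hdne : ((d : ℂ) - 1) ≠ 0 := by
    intro h
    have h2 : ((d : ℝ) - 1 : ℝ) = 0 := by exact_mod_cast h
    linarith
  have hinv : (((((d : ℝ) - 1)⁻¹ : ℝ)) : ℂ) * ((d : ℂ) - 1) = 1 := by
    rw [← hdc]
    exact inv_mul_cancel₀ hdne
  -- key facts for any density input
  have key : ∀ ρ : Matrix (Fin d) (Fin d) ℂ, IsDensity ρ →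
      (((d : ℂ) - 1)⁻¹ • (1 - M ρ)).PosSemidef ∧
      (((d : ℂ) - 1)⁻¹ • (1 - M ρ)).trace = 1 ∧
      ((((((d : ℝ) - 1)⁻¹ : ℝ)) : ℂ) • 1 - ((d : ℂ) - 1)⁻¹ • (1 - M ρ)).PosSemidef := by
    intro ρ hρ
    have hB : (M ρ).PosSemidef := hpos ρ hρ.1
    have hBtr : (M ρ).trace = 1 := by rw [hTP ρ, hρ.2]
    have hBsum : ∑ i, hB.1.eigenvalues i = 1 := by
      have h := herm_trace_eq_sum hB.1
      rw [hBtr] at h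
      exact_mod_cast h.symm
    have hBle : ∀ i, hB.1.eigenvalues i ≤ 1 := by
      intro i
      rw [← hBsum]
      exact Finset.single_le_sum (fun j _ => hB.eigenvalues_nonneg j) (Finset.mem_univ i)
    have h1B : ((1 : Matrix (Fin d) (Fin d) ℂ) - M ρ).PosSemidef := by
      have := smul_one_sub_psd hB.1 (c := 1) hBle
      simpa using this
    have hTform : ((d : ℂ) - 1)⁻¹ • ((1 : Matrix (Fin d) (Fin d) ℂ) - M ρ) =
        (((((d : ℝ) - 1)⁻¹ : ℝ)) : ℂ) • (1 - M ρ) := by rw [hdc]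
    refine ⟨?_, ?_, ?_⟩
    · rw [hTform]
      exact psd_real_smul h1B hcnn
    · rw [Matrix.trace_smul, Matrix.trace_sub, Matrix.trace_one, hBtr]
      rw [hdc]
      simp only [smul_eq_mul, Fintype.card_fin]
      rw [show ((d : ℂ) - 1) = ((Fintype.card (Fin d) : ℂ) - 1) by simp]
      simpa using hinv
    · rw [hTform, ← smul_sub, sub_sub_cancel]
      exact psd_real_smul hB hcnn
  -- lower bound for every output
  have hlb : ∀ x ∈ {x | ∃ ρ, IsDensity ρ ∧
      x = renyi (((d : ℂ) - 1)⁻¹ • (1 - M ρ)) α}, Real.logb 2 ((d : ℝ) - 1) ≤ x := by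
    rintro x ⟨ρ, hρ, rfl⟩
    obtain ⟨hp1, hp2, hp3⟩ := key ρ hρ
    exact renyi_T_ge hd hp1 hp2 hp3 hα
  -- the optimal state
  obtain ⟨ρ₀, hρ₀, hP, hrk⟩ := hpure
  obtain ⟨hp1, hp2, hp3⟩ := key ρ₀ hρ₀
  have hPtr : (M ρ₀).trace = 1 := by rw [hTP ρ₀, hρ₀.2]
  have hXX : ((1 : Matrix (Fin d) (Fin d) ℂ) - M ρ₀) * (1 - M ρ₀) = 1 - M ρ₀ := by
    rw [Matrix.sub_mul, one_mul, Matrix.mul_sub, mul_one, hP.2]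
    abel
  have hsq : ((((d : ℂ) - 1)⁻¹ • ((1 : Matrix (Fin d) (Fin d) ℂ) - M ρ₀)) *
      (((d : ℂ) - 1)⁻¹ • (1 - M ρ₀))).trace = (((((d : ℝ) - 1)⁻¹ : ℝ)) : ℂ) := by
    rw [Matrix.smul_mul, Matrix.mul_smul, hXX, smul_smul, Matrix.trace_smul,
      Matrix.trace_sub, Matrix.trace_one, hPtr]
    simp only [smul_eq_mul, Fintype.card_fin]
    rw [hdc]
    have h2 : ((Fintype.card (Fin d) : ℂ)) - 1 = ((d : ℂ) - 1) := by simp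
    rw [show ((d : ℂ)) - 1 = ((d : ℂ) - 1) from rfl]
    calc (((((d : ℝ) - 1)⁻¹ : ℝ)) : ℂ) * (((((d : ℝ) - 1)⁻¹ : ℝ)) : ℂ) * ((d : ℂ) - 1)
        = (((((d : ℝ) - 1)⁻¹ : ℝ)) : ℂ) * ((((((d : ℝ) - 1)⁻¹ : ℝ)) : ℂ) * ((d : ℂ) - 1)) := by
          ring
      _ = (((((d : ℝ) - 1)⁻¹ : ℝ)) : ℂ) := by rw [hinv, mul_one]
  have hval : renyi (((d : ℂ) - 1)⁻¹ • ((1 : Matrix (Fin d) (Fin d) ℂ) - M ρ₀)) α =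
      Real.logb 2 ((d : ℝ) - 1) := renyi_T_eq hd hp1 hp2 hp3 hsq hα
  have hmem : Real.logb 2 ((d : ℝ) - 1) ∈ {x | ∃ ρ, IsDensity ρ ∧
      x = renyi (((d : ℂ) - 1)⁻¹ • (1 - M ρ)) α} := ⟨ρ₀, hρ₀, hval.symm⟩
  simp only [minOut]
  refine le_antisymm (csInf_le ⟨Real.logb 2 ((d : ℝ) - 1), fun x hx => hlb x hx⟩ hmem)
    (le_csInf ⟨_, hmem⟩ hlb)
end

section
/- The extreme points of the convex set C = {r : r positive semidefinite on ℂ^d, tr r = m, r ≤ 1_d} (with m a positive integer, m ≤ d) are exactly the orthogonal projections of rank m. -/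
open Matrix BigOperators
open scoped ComplexOrder

namespace ExtremeAux

variable {n : Type*} [Fintype n] [DecidableEq n]

noncomputable def cm (U : Matrix n n ℂ) (f : n → ℝ) : Matrix n n ℂ :=
  U * Matrix.diagonal (fun i => (f i : ℂ)) * star U

lemma conj_conj (U A : Matrix n n ℂ) (hU : star U * U = 1) :
    star U * (U * A * star U) * U = A := by
  have h : star U * (U * A * star U) * U = (star U * U) * A * (star U * U) := by
    noncomm_ring
  rw [h, hU, one_mul, mul_one]

lemma cm_psd (U : Matrix n n ℂ) {f : n → ℝ} (hf : ∀ i, 0 ≤ f i) :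
    (cm U f).PosSemidef := by
  have h : (Matrix.diagonal (fun i => (f i : ℂ))).PosSemidef :=
    Matrix.posSemidef_diagonal_iff.mpr fun i => Complex.zero_le_real.mpr (hf i)
  simpa [cm, Matrix.star_eq_conjTranspose] using h.mul_mul_conjTranspose_same U

lemma cm_psd_of {U : Matrix n n ℂ} (hU : star U * U = 1) {f : n → ℝ}
    (h : (cm U f).PosSemidef) (i : n) : 0 ≤ f i := by
  have e : (star U)ᴴ = U := by
    rw [Matrix.star_eq_conjTranspose, Matrix.conjTranspose_conjTranspose]
  have h2 := h.mul_mul_conjTranspose_same (star U)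
  rw [e, cm, conj_conj U _ hU] at h2
  exact Complex.zero_le_real.mp (Matrix.posSemidef_diagonal_iff.mp h2 i)

lemma cm_inj {U : Matrix n n ℂ} (hU : star U * U = 1) {f g : n → ℝ}
    (h : cm U f = cm U g) (i : n) : f i = g i := by
  have h2 : Matrix.diagonal (fun i => (f i : ℂ)) = Matrix.diagonal (fun i => (g i : ℂ)) := by
    have h3 := congrArg (fun A => star U * A * U) h
    simpa only [cm, conj_conj U _ hU] using h3
  have h4 := congrFun (congrFun h2 i) i
  simpa only [Matrix.diagonal_apply_eq, Complex.ofReal_inj] using h4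

lemma cm_mul (U : Matrix n n ℂ) (hU : star U * U = 1) (f g : n → ℝ) :
    cm U f * cm U g = cm U (fun i => f i * g i) := by
  have h : cm U f * cm U g
      = U * (Matrix.diagonal (fun i => (f i : ℂ)) * (star U * U *
          Matrix.diagonal (fun i => (g i : ℂ)))) * star U := by
    simp only [cm]; noncomm_ring
  rw [h, hU, one_mul, Matrix.diagonal_mul_diagonal, cm]
  congr 1
  congr 1
  funext i
  push_cast
  rfl

lemma cm_add (U : Matrix n n ℂ) (f g : n → ℝ) :
    cm U f + cm U g = cm U (fun i => f i + g i) := by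
  have h : (fun i => ((f i + g i : ℝ) : ℂ)) = fun i => (f i : ℂ) + (g i : ℂ) := by
    funext i; push_cast; rfl
  simp only [cm, h, ← Matrix.diagonal_add]
  noncomm_ring

lemma cm_one (U : Matrix n n ℂ) (hU : U * star U = 1) :
    cm U (fun _ => 1) = 1 := by
  simp [cm, Matrix.diagonal_one, hU]

lemma cm_trace (U : Matrix n n ℂ) (hU : star U * U = 1) (f : n → ℝ) :
    (cm U f).trace = ((∑ i, f i : ℝ) : ℂ) := by
  rw [cm, Matrix.trace_mul_cycle, hU, one_mul, Matrix.trace_diagonal]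
  push_cast
  rfl


lemma spectral_cm {A : Matrix n n ℂ} (hA : A.IsHermitian) :
    A = cm (hA.eigenvectorUnitary : Matrix n n ℂ) hA.eigenvalues := by
  have := hA.spectral_theorem
  rw [cm]
  rw [Unitary.conjStarAlgAut_apply] at this
  exact this

lemma unitary_mul_star {A : Matrix n n ℂ} (hA : A.IsHermitian) :
    (hA.eigenvectorUnitary : Matrix n n ℂ) * star (hA.eigenvectorUnitary : Matrix n n ℂ) = 1 :=
  Matrix.mem_unitaryGroup_iff.mp hA.eigenvectorUnitary.2

lemma unitary_star_mul {A : Matrix n n ℂ} (hA : A.IsHermitian) :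
    star (hA.eigenvectorUnitary : Matrix n n ℂ) * (hA.eigenvectorUnitary : Matrix n n ℂ) = 1 :=
  Matrix.mem_unitaryGroup_iff'.mp hA.eigenvectorUnitary.2

/-- Eigenvalues of an idempotent Hermitian matrix are 0 or 1. -/
lemma proj_eigen {P : Matrix n n ℂ} (hP : P.IsHermitian) (hidem : P * P = P) (i : n) :
    hP.eigenvalues i = 0 ∨ hP.eigenvalues i = 1 := by
  have hU := unitary_star_mul hP
  have hspec := spectral_cm hP
  have h1 : cm (hP.eigenvectorUnitary : Matrix n n ℂ) (fun i => hP.eigenvalues i * hP.eigenvalues i)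
      = cm (hP.eigenvectorUnitary : Matrix n n ℂ) hP.eigenvalues := by
    rw [← cm_mul _ hU, ← hspec, hidem]
  have h2 := cm_inj hU h1 i
  rcases mul_eq_zero.mp (show hP.eigenvalues i * (hP.eigenvalues i - 1) = 0 by ring_nf; linarith [h2]) with h | h
  · exact Or.inl h
  · exact Or.inr (by linarith [sub_eq_zero.mp h])

/-- trace of a projection = rank. -/
lemma proj_trace_rank {P : Matrix n n ℂ} (hP : P.IsHermitian) (hidem : P * P = P) :
    P.trace = (P.rank : ℂ) := by
  classical
  have hU := unitary_star_mul hP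
  have htr : P.trace = ((∑ i, hP.eigenvalues i : ℝ) : ℂ) := by
    conv_lhs => rw [spectral_cm hP]
    exact cm_trace _ hU _
  have hsum : ∑ i, hP.eigenvalues i
      = ((Finset.univ.filter (fun i => hP.eigenvalues i ≠ 0)).card : ℝ) := by
    rw [← Finset.sum_boole]
    refine Finset.sum_congr rfl fun i _ => ?_
    rcases proj_eigen hP hidem i with h | h <;> simp [h]
  have hrank : P.rank = (Finset.univ.filter (fun i => hP.eigenvalues i ≠ 0)).card := by
    rw [hP.rank_eq_card_non_zero_eigs, Fintype.card_subtype]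
  rw [htr, hsum, hrank]
  push_cast
  rfl


lemma eq_of_dot_zero {x : Matrix n n ℂ} (hx : (1 - x).PosSemidef) {v : n → ℂ}
    (h : star v ⬝ᵥ ((1 - x) *ᵥ v) = 0) : x *ᵥ v = v := by
  have h2 := (hx.dotProduct_mulVec_zero_iff v).mp h
  rw [Matrix.sub_mulVec, Matrix.one_mulVec, sub_eq_zero] at h2
  exact h2.symm

lemma sum_zero_left {a b : ℝ} {A B : ℂ} (ha : 0 < a) (hb : 0 < b)
    (hA : 0 ≤ A) (hB : 0 ≤ B) (h : (a : ℂ) * A + (b : ℂ) * B = 0) : A = 0 := by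
  have hA' : 0 ≤ (a : ℂ) * A := mul_nonneg (Complex.zero_le_real.mpr ha.le) hA
  have hB' : 0 ≤ (b : ℂ) * B := mul_nonneg (Complex.zero_le_real.mpr hb.le) hB
  have h0 : (a : ℂ) * A = 0 := by
    refine le_antisymm ?_ hA'
    calc (a : ℂ) * A ≤ (a : ℂ) * A + (b : ℂ) * B := le_add_of_nonneg_right hB'
      _ = 0 := h
  have haC : (a : ℂ) ≠ 0 := by exact_mod_cast ha.ne'
  exact (mul_eq_zero.mp h0).resolve_left haC

lemma proj_extreme_aux {P x y : Matrix n n ℂ} (hidem : P * P = P)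
    (hx : x.PosSemidef) (hx1 : (1 - x).PosSemidef)
    (hy : y.PosSemidef) (hy1 : (1 - y).PosSemidef)
    {a b : ℝ} (ha : 0 < a) (hb : 0 < b) (hab : a + b = 1)
    (hsum : a • x + b • y = P) : x = P := by
  have hmv : ∀ v : n → ℂ, a • (x *ᵥ v) + b • (y *ᵥ v) = P *ᵥ v := by
    intro v
    calc a • (x *ᵥ v) + b • (y *ᵥ v) = (a • x + b • y) *ᵥ v := by
          rw [Matrix.add_mulVec, Matrix.smul_mulVec, Matrix.smul_mulVec]
      _ = P *ᵥ v := by rw [hsum]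
  have hdot : ∀ v : n → ℂ,
      (a : ℂ) * (star v ⬝ᵥ (x *ᵥ v)) + (b : ℂ) * (star v ⬝ᵥ (y *ᵥ v)) = star v ⬝ᵥ (P *ᵥ v) := by
    intro v
    rw [← hmv v, dotProduct_add, dotProduct_smul, dotProduct_smul,
      Complex.real_smul, Complex.real_smul]
  have stepA : ∀ v : n → ℂ, P *ᵥ v = v → x *ᵥ v = v := by
    intro v hv
    refine eq_of_dot_zero hx1 ?_
    have key : (a : ℂ) * (star v ⬝ᵥ ((1 - x) *ᵥ v)) + (b : ℂ) * (star v ⬝ᵥ ((1 - y) *ᵥ v)) = 0 := by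
      have h2 := hdot v
      rw [hv] at h2
      have hab' : (a : ℂ) + (b : ℂ) = 1 := by exact_mod_cast hab
      simp only [Matrix.sub_mulVec, Matrix.one_mulVec, dotProduct_sub]
      linear_combination (star v ⬝ᵥ v) * hab' - h2
    exact sum_zero_left ha hb (hx1.dotProduct_mulVec_nonneg v) (hy1.dotProduct_mulVec_nonneg v) key
  have stepB : ∀ v : n → ℂ, P *ᵥ v = 0 → x *ᵥ v = 0 := by
    intro v hv
    have h2 := hdot v
    rw [hv, dotProduct_zero] at h2
    have key := sum_zero_left ha hb (hx.dotProduct_mulVec_nonneg v) (hy.dotProduct_mulVec_nonneg v) h2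
    exact (hx.dotProduct_mulVec_zero_iff v).mp key
  have hall : ∀ v : n → ℂ, x *ᵥ v = P *ᵥ v := by
    intro v
    have h1 : P *ᵥ (P *ᵥ v) = P *ᵥ v := by rw [Matrix.mulVec_mulVec, hidem]
    have h2 : P *ᵥ (v - P *ᵥ v) = 0 := by
      rw [Matrix.mulVec_sub, h1, sub_self]
    calc x *ᵥ v = x *ᵥ (P *ᵥ v + (v - P *ᵥ v)) := by rw [add_sub_cancel]
      _ = x *ᵥ (P *ᵥ v) + x *ᵥ (v - P *ᵥ v) := Matrix.mulVec_add x _ _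
      _ = P *ᵥ v + 0 := by rw [stepA _ h1, stepB _ h2]
      _ = P *ᵥ v := add_zero _
  ext i j
  have h5 := congrFun (hall (Pi.single j 1)) i
  simpa [Matrix.mulVec_single] using h5

end ExtremeAux

/-- the extreme points of `{r : 0 ≤ r ≤ 1, tr r = m}` are exactly the
rank-`m` orthogonal projections. -/
theorem extremePoints_trace_m_contraction {d m : ℕ} (hm : 1 ≤ m) (hmd : m ≤ d) :
    Set.extremePoints ℝ
        {r : Matrix (Fin d) (Fin d) ℂ |
          r.PosSemidef ∧ r.trace = (m : ℂ) ∧ (1 - r).PosSemidef}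
      = {r : Matrix (Fin d) (Fin d) ℂ | IsProjection r ∧ r.rank = m} := by
  ext r
  simp only [mem_extremePoints, Set.mem_setOf_eq]
  constructor
  · rintro ⟨⟨hpsd, htr, hcontr⟩, hext⟩
    have hH : r.IsHermitian := hpsd.1
    set U : Matrix (Fin d) (Fin d) ℂ := (hH.eigenvectorUnitary : Matrix (Fin d) (Fin d) ℂ)
      with hUdef
    have hU1 : U * star U = 1 := ExtremeAux.unitary_mul_star hH
    have hU2 : star U * U = 1 := ExtremeAux.unitary_star_mul hH
    have hspec : r = ExtremeAux.cm U hH.eigenvalues := ExtremeAux.spectral_cm hH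
    set lam := hH.eigenvalues with hlam
    have h0 : ∀ i, 0 ≤ lam i := hpsd.eigenvalues_nonneg
    have hone : ExtremeAux.cm U (fun _ => 1) = 1 := ExtremeAux.cm_one U hU1
    have hsub : ∀ f : Fin d → ℝ,
        ExtremeAux.cm U (fun i => 1 - f i) = 1 - ExtremeAux.cm U f := by
      intro f
      have h2 := ExtremeAux.cm_add U (fun i => 1 - f i) f
      have h3 : (fun i => (1 - f i) + f i) = fun _ : Fin d => (1 : ℝ) := by funext i; ring
      rw [h3, hone] at h2
      exact eq_sub_of_add_eq h2
    have h1 : ∀ i, lam i ≤ 1 := by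
      intro i
      have hc : (ExtremeAux.cm U (fun i => 1 - lam i)).PosSemidef := by
        rw [hsub lam, ← hspec]; exact hcontr
      have h4 := ExtremeAux.cm_psd_of hU2 hc i
      linarith
    have hsumlam : ∑ i, lam i = m := by
      have h5 := ExtremeAux.cm_trace U hU2 lam
      rw [← hspec, htr] at h5
      exact_mod_cast h5.symm
    have key : ∀ i, lam i = 0 ∨ lam i = 1 := by
      by_contra hcon
      push_neg at hcon
      obtain ⟨i, hi0, hi1⟩ := hcon
      have hexj : ∃ j, j ≠ i ∧ lam j ≠ 0 ∧ lam j ≠ 1 := by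
        by_contra hj
        push_neg at hj
        have hsplit : ∑ j, lam j = lam i + ∑ j ∈ Finset.univ.erase i, lam j :=
          (Finset.add_sum_erase Finset.univ lam (Finset.mem_univ i)).symm
        have hcard : ∑ j ∈ Finset.univ.erase i, lam j
            = (((Finset.univ.erase i)).filter (fun j => lam j ≠ 0)).card := by
          rw [← Finset.sum_boole]
          refine Finset.sum_congr rfl fun j hjmem => ?_
          rcases eq_or_ne (lam j) 0 with h | h
          · simp [h]
          · have h6 := hj j (Finset.ne_of_mem_erase hjmem) h
            simp [h, h6]
        set c := (((Finset.univ.erase i)).filter (fun j => lam j ≠ 0)).card with hc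
        have hlami : lam i = (m : ℝ) - c := by
          rw [hsplit, hcard] at hsumlam
          linarith
        have hlt1 : lam i < 1 := lt_of_le_of_ne (h1 i) hi1
        have hgt0 : 0 < lam i := lt_of_le_of_ne (h0 i) (Ne.symm hi0)
        rw [hlami] at hlt1 hgt0
        have h5 : c < m := by exact_mod_cast show (c : ℝ) < m by linarith
        have h6 : m < c + 1 := by exact_mod_cast show (m : ℝ) < c + 1 by linarith
        omega
      obtain ⟨j, hji, hj0, hj1⟩ := hexj
      have hij : i ≠ j := Ne.symm hji
      have hi01 : 0 < lam i ∧ lam i < 1 :=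
        ⟨lt_of_le_of_ne (h0 i) (Ne.symm hi0), lt_of_le_of_ne (h1 i) hi1⟩
      have hj01 : 0 < lam j ∧ lam j < 1 :=
        ⟨lt_of_le_of_ne (h0 j) (Ne.symm hj0), lt_of_le_of_ne (h1 j) hj1⟩
      set ε := min (min (lam i) (1 - lam i)) (min (lam j) (1 - lam j)) with hεdef
      have hεpos : 0 < ε :=
        lt_min (lt_min hi01.1 (by linarith [hi01.2])) (lt_min hj01.1 (by linarith [hj01.2]))
      have hεi1 : ε ≤ lam i := le_trans (min_le_left _ _) (min_le_left _ _)
      have hεi2 : ε ≤ 1 - lam i := le_trans (min_le_left _ _) (min_le_right _ _)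
      have hεj1 : ε ≤ lam j := le_trans (min_le_right _ _) (min_le_left _ _)
      have hεj2 : ε ≤ 1 - lam j := le_trans (min_le_right _ _) (min_le_right _ _)
      set μ₁ : Fin d → ℝ :=
        fun k => lam k + (if k = i then ε else 0) - (if k = j then ε else 0) with hμ₁
      set μ₂ : Fin d → ℝ :=
        fun k => lam k - (if k = i then ε else 0) + (if k = j then ε else 0) with hμ₂
      have hb1 : ∀ k, 0 ≤ μ₁ k ∧ μ₁ k ≤ 1 := by
        intro k
        by_cases hki : k = i
        · subst hki
          have e1 : μ₁ k = lam k + ε := by simp [hμ₁, hij]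
          rw [e1]; constructor <;> linarith [h0 k, hεpos, hεi2]
        · by_cases hkj : k = j
          · subst hkj
            have e1 : μ₁ k = lam k - ε := by simp [hμ₁, hki]
            rw [e1]; constructor <;> linarith [h1 k, hεpos, hεj1]
          · have e1 : μ₁ k = lam k := by simp [hμ₁, hki, hkj]
            rw [e1]; exact ⟨h0 k, h1 k⟩
      have hb2 : ∀ k, 0 ≤ μ₂ k ∧ μ₂ k ≤ 1 := by
        intro k
        by_cases hki : k = i
        · subst hki
          have e1 : μ₂ k = lam k - ε := by simp [hμ₂, hij]
          rw [e1]; constructor <;> linarith [hεpos, hεi1, h1 k]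
        · by_cases hkj : k = j
          · subst hkj
            have e1 : μ₂ k = lam k + ε := by simp [hμ₂, hki]
            rw [e1]; constructor <;> linarith [h0 k, hεpos, hεj2]
          · have e1 : μ₂ k = lam k := by simp [hμ₂, hki, hkj]
            rw [e1]; exact ⟨h0 k, h1 k⟩
      have hsumif : ∀ a : Fin d, (∑ k, if k = a then ε else 0) = ε := by
        intro a
        rw [Finset.sum_ite_eq' Finset.univ a (fun _ => ε)]
        simp
      have hsum1 : ∑ k, μ₁ k = m := by
        simp only [hμ₁]
        rw [Finset.sum_sub_distrib, Finset.sum_add_distrib, hsumif i, hsumif j, hsumlam]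
        ring
      have hsum2 : ∑ k, μ₂ k = m := by
        simp only [hμ₂]
        rw [Finset.sum_add_distrib, Finset.sum_sub_distrib, hsumif i, hsumif j, hsumlam]
        ring
      have hmem : ∀ μ : Fin d → ℝ, (∀ k, 0 ≤ μ k ∧ μ k ≤ 1) → (∑ k, μ k = m) →
          (ExtremeAux.cm U μ).PosSemidef ∧ (ExtremeAux.cm U μ).trace = (m : ℂ) ∧
            (1 - ExtremeAux.cm U μ).PosSemidef := by
        intro μ hb hs
        refine ⟨ExtremeAux.cm_psd U fun k => (hb k).1, ?_, ?_⟩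
        · rw [ExtremeAux.cm_trace U hU2, hs]
          push_cast; rfl
        · rw [← hsub μ]
          exact ExtremeAux.cm_psd U fun k => by linarith [(hb k).2]
      have hxmem := hmem μ₁ hb1 hsum1
      have hymem := hmem μ₂ hb2 hsum2
      have hxy : ExtremeAux.cm U μ₁ + ExtremeAux.cm U μ₂ = r + r := by
        rw [ExtremeAux.cm_add]
        have h7 : (fun k => μ₁ k + μ₂ k) = fun k => lam k + lam k := by
          funext k; simp only [hμ₁, hμ₂]; ring
        rw [h7, ← ExtremeAux.cm_add, ← hspec]
      have hseg : r ∈ openSegment ℝ (ExtremeAux.cm U μ₁) (ExtremeAux.cm U μ₂) := by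
        refine ⟨1/2, 1/2, by norm_num, by norm_num, by norm_num, ?_⟩
        rw [← smul_add, hxy, ← two_smul ℝ r, smul_smul]
        norm_num
      have hx_eq := (hext _ hxmem _ hymem hseg).1
      have h9 := ExtremeAux.cm_inj hU2 (show ExtremeAux.cm U μ₁ = ExtremeAux.cm U lam by
        rw [← hspec]; exact hx_eq) i
      simp [hμ₁, hij] at h9
      linarith
    have hidem : r * r = r := by
      have hfun : (fun k => lam k * lam k) = lam := by
        funext k
        rcases key k with h | h <;> rw [h] <;> ring
      rw [hspec, ExtremeAux.cm_mul U hU2, hfun]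
    refine ⟨⟨hH, hidem⟩, ?_⟩
    have h10 := ExtremeAux.proj_trace_rank hH hidem
    rw [htr] at h10
    exact_mod_cast h10.symm
  · rintro ⟨⟨hH, hidem⟩, hrank⟩
    have hpsd : r.PosSemidef := by
      have h2 := Matrix.posSemidef_conjTranspose_mul_self r
      rwa [hH.eq, hidem] at h2
    have hH1 : (1 - r).IsHermitian := Matrix.isHermitian_one.sub hH
    have hidem1 : (1 - r) * (1 - r) = 1 - r := by
      have h2 : (1 - r) * (1 - r) = 1 - r - r + r * r := by noncomm_ring
      rw [h2, hidem]
      abel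
    have hcontr : (1 - r).PosSemidef := by
      have h2 := Matrix.posSemidef_conjTranspose_mul_self (1 - r)
      rwa [hH1.eq, hidem1] at h2
    have htr : r.trace = (m : ℂ) := by
      rw [ExtremeAux.proj_trace_rank hH hidem, hrank]
    refine ⟨⟨hpsd, htr, hcontr⟩, ?_⟩
    intro x hx y hy hseg
    obtain ⟨a, b, ha, hb, hab, hsum⟩ := hseg
    constructor
    · exact ExtremeAux.proj_extreme_aux hidem hx.1 hx.2.2 hy.1 hy.2.2 ha hb hab hsum
    · refine ExtremeAux.proj_extreme_aux hidem hy.1 hy.2.2 hx.1 hx.2.2 hb ha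
        (by linarith) ?_
      rw [add_comm]
      exact hsum
end

section
/- Let T be a quantum channel whose minimal output von Neumann entropy ν₁(T) is achieved on a set of input states {ρ_i}, and suppose there exists a probability distribution {p_i} such that S(T(Σ_i p_i ρ_i)) = sup_ρ S(T(ρ)). Then the Holevo capacity satisfies C(T) = sup_ρ S(T(ρ)) − ν₁(T). -/
open Matrix BigOperators
open scoped ComplexOrder

section AuxLemmas
variable {n : Type*} [Fintype n] [DecidableEq n]

lemma trace_eq_sum_eig {A : Matrix n n ℂ} (h : A.IsHermitian) :
    A.trace = ∑ i, (h.eigenvalues i : ℂ) := by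
  conv_lhs => rw [h.spectral_theorem]
  rw [Unitary.conjStarAlgAut_apply]
  rw [Matrix.trace_mul_cycle]
  have h1 : (star (Matrix.IsHermitian.eigenvectorUnitary h : Matrix n n ℂ)) *
      (Matrix.IsHermitian.eigenvectorUnitary h : Matrix n n ℂ) = 1 := by
    exact_mod_cast (Matrix.IsHermitian.eigenvectorUnitary h).2.1
  rw [h1, one_mul, Matrix.trace_diagonal]
  rfl

lemma smul_psd {A : Matrix n n ℂ} (hA : A.PosSemidef) {c : ℝ} (hc : 0 ≤ c) :
    ((c : ℂ) • A).PosSemidef := by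
  constructor
  · have h1 := hA.1
    unfold Matrix.IsHermitian at h1 ⊢
    rw [Matrix.conjTranspose_smul, h1, Complex.star_def, Complex.conj_ofReal]
  · intro x
    have hx : (x.sum fun i xi => x.sum fun j xj => star xi * ((c : ℂ) • A) i j * xj) =
        (c : ℂ) * (x.sum fun i xi => x.sum fun j xj => star xi * A i j * xj) := by
      simp only [Finsupp.sum, Finset.mul_sum, Matrix.smul_apply, smul_eq_mul]
      exact Finset.sum_congr rfl fun i _ => Finset.sum_congr rfl fun j _ => by ring
    rw [hx]
    exact mul_nonneg (Complex.zero_le_real.mpr hc) (hA.2 x)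

lemma negMulLog_le_inv_e {x : ℝ} (hx : 0 ≤ x) : -(x * Real.log x) ≤ (Real.exp 1)⁻¹ := by
  rcases hx.eq_or_lt with rfl | hx
  · simp; positivity
  · have h := Real.log_le_sub_one_of_pos (x := (x * Real.exp 1)⁻¹) (by positivity)
    rw [Real.log_inv, Real.log_mul hx.ne' (Real.exp_pos 1).ne', Real.log_exp] at h
    have h2 : -Real.log x ≤ (x * Real.exp 1)⁻¹ := by linarith
    calc -(x * Real.log x) = x * (-Real.log x) := by ring
    _ ≤ x * (x * Real.exp 1)⁻¹ := mul_le_mul_of_nonneg_left h2 hx.le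
    _ = (Real.exp 1)⁻¹ := by field_simp

lemma channel_psd {T : Matrix n n ℂ → Matrix n n ℂ} (hT : IsChannel T)
    {ρ : Matrix n n ℂ} (hρ : ρ.PosSemidef) : (T ρ).PosSemidef := by
  have hX : (ρ.submatrix (Prod.fst : n × Fin 1 → n) Prod.fst).PosSemidef :=
    hρ.submatrix _
  have h := hT.2.1 1 _ hX
  have heq : T ρ = (ampl T (ρ.submatrix (Prod.fst : n × Fin 1 → n) Prod.fst)).submatrix
      (fun a : n => (a, (0 : Fin 1))) (fun a : n => (a, (0 : Fin 1))) := rfl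
  rw [heq]
  exact h.submatrix _

lemma density_map {T : Matrix n n ℂ → Matrix n n ℂ} (hT : IsChannel T)
    {ρ : Matrix n n ℂ} (hρ : IsDensity ρ) : IsDensity (T ρ) :=
  ⟨channel_psd hT hρ.1, by rw [hT.2.2, hρ.2]⟩

lemma density_sum {ι : Type*} [Fintype ι] {p : ι → ℝ} {σ : ι → Matrix n n ℂ}
    (hp0 : ∀ i, 0 ≤ p i) (hp1 : ∑ i, p i = 1) (hσ : ∀ i, IsDensity (σ i)) :
    IsDensity (∑ i, (p i : ℂ) • σ i) := by
  constructor
  · exact Finset.sum_induction _ _ (fun a b ha hb => ha.add hb) Matrix.PosSemidef.zero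
      (fun i _ => smul_psd (hσ i).1 (hp0 i))
  · rw [Matrix.trace_sum]
    have : ∀ i : ι, ((p i : ℂ) • σ i).trace = (p i : ℂ) := by
      intro i
      rw [Matrix.trace_smul, (hσ i).2, smul_eq_mul, mul_one]
    rw [Finset.sum_congr rfl (fun i _ => this i)]
    exact_mod_cast congrArg (Complex.ofReal) hp1

lemma sum_eig_one {σ : Matrix n n ℂ} (hσ : IsDensity σ) :
    ∑ i, hσ.1.1.eigenvalues i = 1 := by
  have h := (trace_eq_sum_eig hσ.1.1).symm.trans hσ.2
  exact_mod_cast h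

lemma eig_le_one {σ : Matrix n n ℂ} (hσ : IsDensity σ) (i : n) :
    hσ.1.1.eigenvalues i ≤ 1 := by
  rw [← sum_eig_one hσ]
  exact Finset.single_le_sum (fun j _ => hσ.1.eigenvalues_nonneg j) (Finset.mem_univ i)

lemma vN_nonneg {σ : Matrix n n ℂ} (hσ : IsDensity σ) : 0 ≤ vN σ := by
  rw [vN, dif_pos hσ.1.1, neg_nonneg]
  apply Finset.sum_nonpos
  intro i _
  exact mul_nonpos_of_nonneg_of_nonpos (hσ.1.eigenvalues_nonneg i)
    (Real.logb_nonpos one_lt_two (hσ.1.eigenvalues_nonneg i) (eig_le_one hσ i))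

lemma vN_le_bound {σ : Matrix n n ℂ} (hσ : IsDensity σ) :
    vN σ ≤ (Fintype.card n : ℝ) * ((Real.exp 1)⁻¹ / Real.log 2) := by
  rw [vN, dif_pos hσ.1.1, ← Finset.sum_neg_distrib]
  have hterm : ∀ i : n, -(hσ.1.1.eigenvalues i * Real.logb 2 (hσ.1.1.eigenvalues i)) ≤
      (Real.exp 1)⁻¹ / Real.log 2 := by
    intro i
    rw [Real.logb, div_eq_mul_inv]
    have : -(hσ.1.1.eigenvalues i * (Real.log (hσ.1.1.eigenvalues i) * (Real.log 2)⁻¹)) =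
        -(hσ.1.1.eigenvalues i * Real.log (hσ.1.1.eigenvalues i)) * (Real.log 2)⁻¹ := by ring
    rw [this, div_eq_mul_inv]
    exact mul_le_mul_of_nonneg_right (negMulLog_le_inv_e (hσ.1.eigenvalues_nonneg i))
      (by positivity)
  calc ∑ i, -(hσ.1.1.eigenvalues i * Real.logb 2 (hσ.1.1.eigenvalues i))
      ≤ ∑ _i : n, (Real.exp 1)⁻¹ / Real.log 2 :=
        Finset.sum_le_sum (fun i _ => hterm i)
    _ = (Fintype.card n : ℝ) * ((Real.exp 1)⁻¹ / Real.log 2) := by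
        rw [Finset.sum_const, Finset.card_univ, nsmul_eq_mul]

end AuxLemmas

/-- if the minimal output entropy is achieved on states whose convex
combination has maximal-entropy output, then `C(T) = sup S(T(ρ)) - ν₁(T)`. -/
theorem holevoCap_eq_max_sub_min {n : Type*} [Fintype n] [DecidableEq n]
    (T : Matrix n n ℂ → Matrix n n ℂ) (hT : IsChannel T)
    {ι : Type} [Fintype ι] [Nonempty ι]
    (ρ : ι → Matrix n n ℂ) (hρ : ∀ i, IsDensity (ρ i))
    (hmin : ∀ i, vN (T (ρ i)) = minOut T 1)
    (p : ι → ℝ) (hp0 : ∀ i, 0 ≤ p i) (hp1 : ∑ i, p i = 1)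
    (hmax : vN (T (∑ i, (p i : ℂ) • ρ i)) = maxVN T) :
    holevoCap T = maxVN T - minOut T 1 := by
  classical
  set B : ℝ := (Fintype.card n : ℝ) * ((Real.exp 1)⁻¹ / Real.log 2) with hB
  -- facts about minOut
  have hbbelow : BddBelow {x | ∃ ρ, IsDensity ρ ∧ x = renyi (T ρ) 1} := by
    refine ⟨0, fun x hx => ?_⟩
    obtain ⟨σ, hσ, rfl⟩ := hx
    rw [renyi, if_pos rfl]
    exact vN_nonneg (density_map hT hσ)
  have hmle : ∀ σ : Matrix n n ℂ, IsDensity σ → minOut T 1 ≤ vN (T σ) := by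
    intro σ hσ
    exact csInf_le hbbelow ⟨σ, hσ, by rw [renyi, if_pos rfl]⟩
  -- facts about maxVN
  have hmaxbdd : BddAbove {x | ∃ ρ, IsDensity ρ ∧ x = vN (T ρ)} := by
    refine ⟨B, fun x hx => ?_⟩
    obtain ⟨σ, hσ, rfl⟩ := hx
    exact vN_le_bound (density_map hT hσ)
  have hvle : ∀ σ : Matrix n n ℂ, IsDensity σ → vN (T σ) ≤ maxVN T := by
    intro σ hσ
    exact le_csSup hmaxbdd ⟨σ, hσ, rfl⟩
  -- the Holevo set
  set S := {x | ∃ (k : ℕ) (p : Fin k → ℝ) (σ : Fin k → Matrix n n ℂ),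
    (∀ i, 0 ≤ p i) ∧ (∑ i, p i = 1) ∧ (∀ i, IsDensity (σ i)) ∧
    x = vN (T (∑ i, (p i : ℂ) • σ i)) - ∑ i, p i * vN (T (σ i))} with hS
  have hSbdd : BddAbove S := by
    refine ⟨B, fun x hx => ?_⟩
    obtain ⟨k, q, σ, hq0, hq1, hσ, rfl⟩ := hx
    have h1 : vN (T (∑ i, (q i : ℂ) • σ i)) ≤ B :=
      vN_le_bound (density_map hT (density_sum hq0 hq1 hσ))
    have h2 : (0 : ℝ) ≤ ∑ i, q i * vN (T (σ i)) :=
      Finset.sum_nonneg (fun i _ => mul_nonneg (hq0 i) (vN_nonneg (density_map hT (hσ i))))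
    linarith
  -- the key element
  have key : maxVN T - minOut T 1 ∈ S := by
    obtain ⟨e⟩ := Fintype.truncEquivFin ι
    refine ⟨Fintype.card ι, p ∘ e.symm, ρ ∘ e.symm, fun i => hp0 _, ?_, fun i => hρ _, ?_⟩
    · rw [← hp1]
      exact (Fintype.sum_equiv e p (p ∘ e.symm) (fun i => by simp)).symm
    · have hsum : ∑ i : Fin (Fintype.card ι), ((p ∘ e.symm) i : ℂ) • (ρ ∘ e.symm) i =
          ∑ i, (p i : ℂ) • ρ i :=
        (Fintype.sum_equiv e _ _ (fun i => by simp)).symm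
      rw [hsum, hmax]
      have hminsum : ∑ i : Fin (Fintype.card ι), (p ∘ e.symm) i * vN (T ((ρ ∘ e.symm) i)) =
          minOut T 1 := by
        have h1 : ∀ i : Fin (Fintype.card ι),
            (p ∘ e.symm) i * vN (T ((ρ ∘ e.symm) i)) = (p ∘ e.symm) i * minOut T 1 := by
          intro i
          rw [Function.comp_apply, Function.comp_apply, hmin]
        rw [Finset.sum_congr rfl (fun i _ => h1 i), ← Finset.sum_mul]
        have h2 : ∑ i : Fin (Fintype.card ι), (p ∘ e.symm) i = 1 := by
          rw [← hp1]
          exact (Fintype.sum_equiv e p (p ∘ e.symm) (fun i => by simp)).symm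
        rw [h2, one_mul]
      rw [hminsum]
  apply le_antisymm
  · apply csSup_le ⟨_, key⟩
    intro x hx
    obtain ⟨k, q, σ, hq0, hq1, hσ, rfl⟩ := hx
    have h1 : vN (T (∑ i, (q i : ℂ) • σ i)) ≤ maxVN T :=
      hvle _ (density_sum hq0 hq1 hσ)
    have h2 : minOut T 1 ≤ ∑ i, q i * vN (T (σ i)) := by
      calc minOut T 1 = ∑ i, q i * minOut T 1 := by rw [← Finset.sum_mul, hq1, one_mul]
      _ ≤ ∑ i, q i * vN (T (σ i)) :=
          Finset.sum_le_sum (fun i _ => mul_le_mul_of_nonneg_left (hmle _ (hσ i)) (hq0 i))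
    linarith
  · exact le_csSup hSbdd key
end

section
/- Let M(ρ) = ρ_n^T ⊗ 1_D/D on ℂ^d = ℂ^n ⊗ ℂ^D (where ρ_n is the reduction to the first factor) and T(ρ) = (1_d − D·M(ρ))/(d − D) with d = nD, n > 1. Then T is completely positive, i.e., (T⊗id)(Ω) = (1_{d²}/d − F_n⊗1_{D²}/d)/(d−D) ≥ 0 where Ω is the maximally entangled state, but the partial transpose of (T⊗id)(Ω) is not positive semidefinite, so T is not entanglement-breaking. -/
open Matrix BigOperators
open scoped ComplexOrder

open Matrix in
lemma aux_smul_psd {m : Type*} [Fintype m] {A : Matrix m m ℂ} (hA : A.PosSemidef)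
    (r : ℝ) (hr : 0 ≤ r) : ((r : ℂ) • A).PosSemidef := by
  refine Matrix.PosSemidef.of_dotProduct_mulVec_nonneg ?_ (fun x => ?_)
  · have : star (r : ℂ) = (r : ℂ) := by simp [Complex.star_def, Complex.conj_ofReal]
    rw [Matrix.IsHermitian, Matrix.conjTranspose_smul, this, hA.1.eq]
  · rw [Matrix.smul_mulVec, dotProduct_smul, smul_eq_mul]
    exact mul_nonneg (Complex.zero_le_real.mpr hr) (hA.dotProduct_mulVec_nonneg x)

set_option maxHeartbeats 1000000 in
/-- the coarse-graining channel `T(ρ) = (1 - D·(ρ_n^T ⊗ 1_D/D))/(d - D)`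
on `ℂ^d = ℂ^n ⊗ ℂ^D` is completely positive on the maximally entangled state, with
`(T⊗id)(Ω) = (1/d - F_n⊗1/d)/(d-D) ≥ 0`, but `(T⊗id)(Ω)` does not have positive partial
transpose, so `T` is not entanglement-breaking. -/
theorem coarseGraining_cp_not_entanglement_breaking {n D : ℕ} (hn : 1 < n) (hD : 1 ≤ D)
    (M T : Matrix (Fin n × Fin D) (Fin n × Fin D) ℂ →
      Matrix (Fin n × Fin D) (Fin n × Fin D) ℂ)
    (hM : ∀ ρ, M ρ = Matrix.of fun p q : Fin n × Fin D =>
      (∑ k : Fin D, ρ (q.1, k) (p.1, k)) * (if p.2 = q.2 then (D : ℂ)⁻¹ else 0))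
    (hT : ∀ X, T X = ((n * D : ℂ) - (D : ℂ))⁻¹ • (X.trace • 1 - (D : ℂ) • M X))
    (Ω Fbig : Matrix ((Fin n × Fin D) × (Fin n × Fin D))
      ((Fin n × Fin D) × (Fin n × Fin D)) ℂ)
    (hΩ : Ω = Matrix.of fun p q =>
      if p.1 = p.2 ∧ q.1 = q.2 then ((n * D : ℂ))⁻¹ else 0)
    (hF : Fbig = Matrix.of fun p q =>
      if p.1.1 = q.2.1 ∧ p.2.1 = q.1.1 ∧ p.1.2 = q.1.2 ∧ p.2.2 = q.2.2
        then (1 : ℂ) else 0) :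
    ampl T Ω = ((n * D : ℂ) - (D : ℂ))⁻¹ •
        (((n * D : ℂ))⁻¹ • 1 - ((n * D : ℂ))⁻¹ • Fbig) ∧
    (ampl T Ω).PosSemidef ∧
    ¬ (pt2 (ampl T Ω)).PosSemidef := by
  have hD0 : (D : ℂ) ≠ 0 := Nat.cast_ne_zero.mpr (by omega)
  have hDc : (D:ℂ) * (((n:ℂ) * D)⁻¹ * (D:ℂ)⁻¹) = ((n:ℂ)*(D:ℂ))⁻¹ := by
    field_simp
  have hDc2 : (D:ℂ) * ((D:ℂ)⁻¹)^2 = (D:ℂ)⁻¹ := by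
    rw [sq]; rw [← mul_assoc, mul_inv_cancel₀ hD0, one_mul]
  have key : ampl T Ω = ((n * D : ℂ) - (D : ℂ))⁻¹ •
      (((n * D : ℂ))⁻¹ • 1 - ((n * D : ℂ))⁻¹ • Fbig) := by
    ext ⟨⟨a,i⟩,⟨b,j⟩⟩ ⟨⟨c,k⟩,⟨e,l⟩⟩
    rw [show ampl T Ω ((a,i),b,j) ((c,k),e,l)
      = T (Matrix.of fun x y => Ω (x, (b,j)) (y, (e,l))) (a,i) (c,k) from rfl, hT]
    simp only [ampl, hT, hΩ, hF, hM, Matrix.smul_apply, Matrix.sub_apply, Matrix.of_apply,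
      Matrix.one_apply, Matrix.trace, Matrix.diag, Prod.mk.injEq, Fintype.sum_prod_type,
      smul_eq_mul, ite_and, Finset.sum_ite_eq, Finset.sum_ite_eq', Finset.mem_univ, if_true,
      mul_ite, mul_one, mul_zero, ite_mul, zero_mul]
    clear hM hT hΩ hF
    by_cases hcb : c = b <;> by_cases hae : a = e <;>
      simp [hcb, hae, Finset.sum_ite_eq, Finset.sum_ite_eq'] <;>
      split_ifs <;>
      first
        | ring1
        | exact Or.inl trivial
        | (left; rw [sq, ← mul_assoc, mul_inv_cancel₀ hD0, one_mul])
        | (subst_vars; simp_all)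
  -- hermiticity and involutivity of Fbig
  have hFH : Fbigᴴ = Fbig := by
    rw [hF]
    ext ⟨⟨a,i⟩,⟨b,j⟩⟩ ⟨⟨c,k⟩,⟨e,l⟩⟩
    simp only [Matrix.conjTranspose_apply, Matrix.of_apply, apply_ite (star : ℂ → ℂ), star_one, star_zero]
    split_ifs <;> first | rfl | (subst_vars; simp_all)
  have hFF : Fbig * Fbig = 1 := by
    rw [hF]
    ext ⟨⟨a,i⟩,⟨b,j⟩⟩ ⟨⟨c,k⟩,⟨e,l⟩⟩
    rw [Matrix.mul_apply]
    simp only [Matrix.of_apply, Matrix.one_apply, Prod.mk.injEq, Fintype.sum_prod_type,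
      ite_and, mul_ite, mul_one, mul_zero, ite_mul, zero_mul, one_mul,
      Finset.sum_ite_eq, Finset.sum_ite_eq', Finset.mem_univ, if_true,
      Finset.sum_ite_irrel, Finset.sum_const_zero]
    split_ifs <;> first | rfl | (subst_vars; simp_all)
  set G : Matrix ((Fin n × Fin D) × (Fin n × Fin D)) ((Fin n × Fin D) × (Fin n × Fin D)) ℂ :=
    1 - Fbig with hG
  have hGH : Gᴴ = G := by
    rw [hG, Matrix.conjTranspose_sub, Matrix.conjTranspose_one, hFH]
  have hGG : Gᴴ * G = (2:ℂ) • G := by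
    rw [hGH, hG, show ((1 - Fbig) * (1 - Fbig)) = 1 - Fbig - Fbig + Fbig * Fbig from by
      noncomm_ring, hFF, two_smul]
    abel
  have hGpsd : G.PosSemidef := by
    have h1 : G = (2:ℂ)⁻¹ • (Gᴴ * G) := by
      rw [hGG, smul_smul]; norm_num
    rw [h1]
    have : ((2:ℂ))⁻¹ = (((2:ℝ)⁻¹ : ℝ) : ℂ) := by norm_num
    rw [this]
    exact aux_smul_psd (Matrix.posSemidef_conjTranspose_mul_self G) _ (by norm_num)
  refine ⟨key, ?_, ?_⟩
  · -- positive semidefiniteness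
    rw [key]
    have h2 : ((n * D : ℂ) - (D : ℂ))⁻¹ • (((n * D : ℂ))⁻¹ • 1 - ((n * D : ℂ))⁻¹ • Fbig)
        = (((n * D : ℂ) - (D : ℂ))⁻¹ * ((n * D : ℂ))⁻¹) • G := by
      rw [hG, ← smul_sub, smul_smul]
    rw [h2]
    have hcast : ((n * D : ℂ) - (D : ℂ))⁻¹ * ((n * D : ℂ))⁻¹
        = ((((n * D - D : ℕ) : ℝ)⁻¹ * (((n * D : ℕ)) : ℝ)⁻¹ : ℝ) : ℂ) := by
      have : ((n * D : ℕ) : ℂ) - (D : ℂ) = ((n * D - D : ℕ) : ℂ) := by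
        rw [Nat.cast_sub (Nat.le_mul_of_pos_left D (by omega))]
      push_cast
      rw [← this]
      push_cast
      ring
    rw [hcast]
    exact aux_smul_psd hGpsd _ (by positivity)
  · -- not PPT
    intro hps
    set z : Fin D := ⟨0, by omega⟩ with hz
    set x : ((Fin n × Fin D) × (Fin n × Fin D)) → ℂ :=
      fun p => if p.1.1 = p.2.1 ∧ p.1.2 = z ∧ p.2.2 = z then 1 else 0 with hx
    have h0 := hps.dotProduct_mulVec_nonneg x
    have hval : star x ⬝ᵥ (pt2 (ampl T Ω)) *ᵥ x
        = ((n * D : ℂ) - (D : ℂ))⁻¹ * ((n * D : ℂ))⁻¹ * ((n:ℂ) - (n:ℂ)^2) := by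
      rw [key]
      simp only [pt2, dotProduct, Matrix.mulVec, Matrix.smul_apply, Matrix.sub_apply,
        Matrix.one_apply, Matrix.of_apply, hF, hx, Prod.mk.injEq, Fintype.sum_prod_type,
        smul_eq_mul, ite_and, Finset.sum_ite_eq, Finset.sum_ite_eq', Finset.mem_univ, if_true,
        mul_ite, mul_one, mul_zero, ite_mul, zero_mul, one_mul, apply_ite (star : ℂ → ℂ), star_one, star_zero,
        Pi.star_apply, Finset.sum_ite_irrel, Finset.sum_const_zero, Finset.sum_const,
        Finset.card_univ, Fintype.card_fin, nsmul_eq_mul]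
      have hite : ∀ (a b : Fin n) (v : ℂ),
          (if a = b then if b = a then v else 0 else 0) = if a = b then v else 0 := by
        intros a b v; split_ifs <;> simp_all
      simp only [hite]
      have h1 : ∀ (a : Fin n), (∑ b : Fin n,
          ((n:ℂ) * D - D)⁻¹ * ((if a = b then ((n:ℂ) * D)⁻¹ else 0) - ((n:ℂ) * D)⁻¹)) =
          ((n:ℂ) * D - D)⁻¹ * (((n:ℂ) * D)⁻¹ - (n:ℂ) * ((n:ℂ) * D)⁻¹) := by
        intro a
        rw [← Finset.mul_sum, Finset.sum_sub_distrib, Finset.sum_const, Finset.card_univ,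
          Fintype.card_fin, Finset.sum_ite_eq, if_pos (Finset.mem_univ a), nsmul_eq_mul]
      rw [Finset.sum_congr rfl (fun a _ => h1 a), Finset.sum_const, Finset.card_univ,
        Fintype.card_fin, nsmul_eq_mul]
      ring1
    rw [hval] at h0
    have hcast2 : ((n * D : ℂ) - (D : ℂ))⁻¹ * ((n * D : ℂ))⁻¹ * ((n:ℂ) - (n:ℂ)^2)
        = ((((n * D - D : ℕ) : ℝ)⁻¹ * (((n * D : ℕ)) : ℝ)⁻¹ * ((n:ℝ) - (n:ℝ)^2) : ℝ) : ℂ) := by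
      have : ((n * D : ℕ) : ℂ) - (D : ℂ) = ((n * D - D : ℕ) : ℂ) := by
        rw [Nat.cast_sub (Nat.le_mul_of_pos_left D (by omega))]
      push_cast
      rw [← this]
      push_cast
      ring
    rw [hcast2] at h0
    have hneg : (((n * D - D : ℕ) : ℝ)⁻¹ * (((n * D : ℕ)) : ℝ)⁻¹ * ((n:ℝ) - (n:ℝ)^2) : ℝ) < 0 := by
      have h1 : (0:ℝ) < ((n * D - D : ℕ) : ℝ)⁻¹ := by
        have hlt : D < n * D := by nlinarith
        have : 0 < n * D - D := by omega
        positivity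
      have h2 : (0:ℝ) < (((n * D : ℕ)) : ℝ)⁻¹ := by
        have : 0 < n * D := by positivity
        positivity
      have h3 : ((n:ℝ) - (n:ℝ)^2) < 0 := by
        have : (1:ℝ) < (n:ℝ) := by exact_mod_cast hn
        nlinarith
      have := mul_pos h1 h2
      nlinarith
    rw [Complex.zero_le_real] at h0
    linarith
end
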